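/- arXiv:1605.00625 — 9 statements merged into one kernel-verified Lean document; each statement's English description precedes it below -/
import Mathlib

section
/- Let q ≥ 2 be an integer (so q is not a root of unity) and let r, r', d, d' be nonnegative integers. If q^{-r} + q^{-r-d-1} = q^{-r'} + q^{-r'-d'-1} and q^{-2r-d} = q^{-2r'-d'}, then r = r' and d = d'. -/
lemma key_pow (Q : ℝ) (hQ : 2 ≤ Q) (a b c e : ℤ) (hab : b ≤ a) (hce : e ≤ c)
    (h : Q ^ a + Q ^ b = Q ^ c + Q ^ e) : a = c ∧ b = e := by
  have hQ1 : (1 : ℝ) < Q := by linarith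
  have hQ0 : (0 : ℝ) < Q := by linarith
  have mono := zpow_right_strictMono₀ hQ1
  have key : ∀ x y u v : ℤ, y ≤ x → v ≤ u → Q ^ x + Q ^ y = Q ^ u + Q ^ v → x ≤ u := by
    intro x y u v hxy huv heq
    by_contra hlt
    push_neg at hlt
    have h1 : u + 1 ≤ x := hlt
    have h2 : Q ^ u + Q ^ v ≤ 2 * Q ^ u := by
      have := mono.le_iff_le.2 huv
      linarith
    have h3 : 2 * Q ^ u ≤ Q ^ (u + 1) := by
      rw [zpow_add_one₀ (ne_of_gt hQ0)]
      have : 0 < Q ^ u := zpow_pos hQ0 u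
      nlinarith
    have h4 : Q ^ (u + 1) ≤ Q ^ x := mono.le_iff_le.2 h1
    have h5 : 0 < Q ^ y := zpow_pos hQ0 y
    linarith
  have hac : a = c := le_antisymm (key a b c e hab hce h) (key c e a b hce hab h.symm)
  subst hac
  refine ⟨rfl, mono.injective ?_⟩
  linarith

theorem stmt_0 (q : ℕ) (hq : 2 ≤ q) (r d r' d' : ℕ)
    (h1 : (q : ℝ) ^ (-(r : ℤ)) + (q : ℝ) ^ (-(r : ℤ) - (d : ℤ) - 1)
        = (q : ℝ) ^ (-(r' : ℤ)) + (q : ℝ) ^ (-(r' : ℤ) - (d' : ℤ) - 1))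
    (h2 : (q : ℝ) ^ (-2 * (r : ℤ) - (d : ℤ)) = (q : ℝ) ^ (-2 * (r' : ℤ) - (d' : ℤ))) :
    r = r' ∧ d = d' := by
  have hQ : (2 : ℝ) ≤ (q : ℝ) := by exact_mod_cast hq
  have := key_pow (q : ℝ) hQ (-(r : ℤ)) (-(r : ℤ) - (d : ℤ) - 1) (-(r' : ℤ))
    (-(r' : ℤ) - (d' : ℤ) - 1) (by omega) (by omega) h1
  omega
end

section
/- Let R, L, K be elements of an associative algebra over ℂ with K invertible, satisfying RK = qKR, LK = q⁻¹KL, q(q+1)⁻¹RL² − LRL + (q+1)⁻¹L²R + LK = 0, and q(q+1)⁻¹R²L − RLR + (q+1)⁻¹LR² + KR = 0, where q is a nonzero scalar with q, q², q³ ≠ 1. Set τ = q^{1/2} (a fixed square root of q). Then R and L satisfy the cubic q^{1/2}-Serre relations: R³L − [3]_τ R²LR + [3]_τ RLR² − LR³ = 0 and L³R − [3]_τ L²RL + [3]_τ LRL² − RL³ = 0, where [3]_τ = (τ³ − τ⁻³)/(τ − τ⁻¹) = τ² + 1 + τ⁻². -/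
theorem stmt_2 (A : Type*) [Ring A] [Algebra ℂ A] (q τ : ℂ)
    (hq0 : q ≠ 0) (hq1 : q ≠ 1) (hq2 : q ^ 2 ≠ 1) (hq3 : q ^ 3 ≠ 1)
    (hτ : τ ^ 2 = q)
    (R L K : A) (hK : IsUnit K)
    (h1 : R * K = q • (K * R))
    (h2 : L * K = q⁻¹ • (K * L))
    (h3 : (q * (q + 1)⁻¹) • (R * L * L) - L * R * L + (q + 1)⁻¹ • (L * L * R) + L * K = 0)
    (h4 : (q * (q + 1)⁻¹) • (R * R * L) - R * L * R + (q + 1)⁻¹ • (L * R * R) + K * R = 0) :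
    R * R * R * L - (τ ^ 2 + 1 + (τ⁻¹) ^ 2) • (R * R * L * R)
      + (τ ^ 2 + 1 + (τ⁻¹) ^ 2) • (R * L * R * R) - L * R * R * R = 0
    ∧ L * L * L * R - (τ ^ 2 + 1 + (τ⁻¹) ^ 2) • (L * L * R * L)
      + (τ ^ 2 + 1 + (τ⁻¹) ^ 2) • (L * R * L * L) - R * L * L * L = 0 := by
  have hb : q + 1 ≠ 0 := by
    intro h
    apply hq2
    have : q = -1 := by linear_combination h
    rw [this]; ring
  have hc : τ ^ 2 + 1 + (τ⁻¹) ^ 2 = q + 1 + q⁻¹ := by rw [inv_pow, hτ]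
  have e1 : (q * (q + 1)⁻¹) • (R * R * L * R) - R * L * R * R + (q + 1)⁻¹ • (L * R * R * R)
      + K * R * R = 0 := by
    have h := congrArg (· * R) h4
    simpa only [add_mul, sub_mul, smul_mul_assoc, zero_mul] using h
  have e2 : (q * (q + 1)⁻¹) • (R * R * R * L) - R * R * L * R + (q + 1)⁻¹ • (R * L * R * R)
      + q • (K * R * R) = 0 := by
    have h := congrArg (R * ·) h4
    simp only [mul_add, mul_sub, mul_smul_comm, mul_zero, ← mul_assoc] at h
    rw [h1] at h
    simpa only [smul_mul_assoc] using h
  have e3 : (q * (q + 1)⁻¹) • (R * L * L * L) - L * R * L * L + (q + 1)⁻¹ • (L * L * R * L)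
      + q⁻¹ • (K * L * L) = 0 := by
    have h := congrArg (· * L) h3
    simp only [add_mul, sub_mul, smul_mul_assoc, zero_mul] at h
    rw [h2] at h
    simpa only [smul_mul_assoc] using h
  have e4 : (q * (q + 1)⁻¹) • (L * R * L * L) - L * L * R * L + (q + 1)⁻¹ • (L * L * L * R)
      + (q⁻¹ * q⁻¹) • (K * L * L) = 0 := by
    have h := congrArg (L * ·) h3
    simp only [mul_add, mul_sub, mul_smul_comm, mul_zero] at h
    rw [h2] at h
    simp only [mul_smul_comm, ← mul_assoc] at h
    rw [h2] at h
    simpa only [smul_mul_assoc, smul_smul] using h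
  constructor
  · rw [hc]
    rw [show R * R * R * L - (q + 1 + q⁻¹) • (R * R * L * R)
        + (q + 1 + q⁻¹) • (R * L * R * R) - L * R * R * R
        = (q * (q + 1)⁻¹)⁻¹ • (((q * (q + 1)⁻¹) • (R * R * R * L) - R * R * L * R
            + (q + 1)⁻¹ • (R * L * R * R) + q • (K * R * R))
          - q • ((q * (q + 1)⁻¹) • (R * R * L * R) - R * L * R * R
            + (q + 1)⁻¹ • (L * R * R * R) + K * R * R)) from by
      match_scalars <;> field_simp <;> ring]
    rw [e2, e1]; simp
  · rw [hc]
    rw [show L * L * L * R - (q + 1 + q⁻¹) • (L * L * R * L)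
        + (q + 1 + q⁻¹) • (L * R * L * L) - R * L * L * L
        = (q * (q + 1)⁻¹)⁻¹ • (q • ((q * (q + 1)⁻¹) • (L * R * L * L) - L * L * R * L
            + (q + 1)⁻¹ • (L * L * L * R) + (q⁻¹ * q⁻¹) • (K * L * L))
          - ((q * (q + 1)⁻¹) • (R * L * L * L) - L * R * L * L
            + (q + 1)⁻¹ • (L * L * R * L) + q⁻¹ • (K * L * L))) from by
      match_scalars <;> field_simp <;> ring]
    rw [e4, e3]; simp
end

section
/- Let R, L, K be elements of an associative algebra over ℂ with K invertible, satisfying RK = qKR, LK = q⁻¹KL, q(q+1)⁻¹RL² − LRL + (q+1)⁻¹L²R + LK = 0, and q(q+1)⁻¹R²L − RLR + (q+1)⁻¹LR² + KR = 0, where q is a nonzero scalar with q ≠ ±1. Then the elements RL, LR, K, K⁻¹ mutually commute. -/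
theorem stmt_3 (A : Type*) [Ring A] [Algebra ℂ A] (q : ℂ)
    (hq0 : q ≠ 0) (hq1 : q ≠ 1) (hq1' : q ≠ -1)
    (R L K Ki : A) (hK : K * Ki = 1) (hK' : Ki * K = 1)
    (h1 : R * K = q • (K * R))
    (h2 : L * K = q⁻¹ • (K * L))
    (h3 : (q * (q + 1)⁻¹) • (R * L * L) - L * R * L + (q + 1)⁻¹ • (L * L * R) + L * K = 0)
    (h4 : (q * (q + 1)⁻¹) • (R * R * L) - R * L * R + (q + 1)⁻¹ • (L * R * R) + K * R = 0) :
    Commute (R * L) (L * R) ∧ Commute (R * L) K ∧ Commute (R * L) Ki ∧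
    Commute (L * R) K ∧ Commute (L * R) Ki ∧ Commute K Ki := by
  have hq1n : q + 1 ≠ 0 := by
    intro h
    exact hq1' (by linear_combination h)
  have c1 : R * L * K = K * (R * L) := by
    calc R * L * K = R * (L * K) := by rw [mul_assoc]
      _ = q⁻¹ • (R * (K * L)) := by rw [h2, mul_smul_comm]
      _ = q⁻¹ • (R * K * L) := by rw [mul_assoc]
      _ = q⁻¹ • ((q • (K * R)) * L) := by rw [h1]
      _ = (q⁻¹ * q) • (K * (R * L)) := by rw [smul_mul_assoc, smul_smul, mul_assoc]
      _ = K * (R * L) := by rw [inv_mul_cancel₀ hq0, one_smul]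
  have c2 : L * R * K = K * (L * R) := by
    calc L * R * K = L * (R * K) := by rw [mul_assoc]
      _ = q • (L * (K * R)) := by rw [h1, mul_smul_comm]
      _ = q • (L * K * R) := by rw [mul_assoc]
      _ = q • ((q⁻¹ • (K * L)) * R) := by rw [h2]
      _ = (q * q⁻¹) • (K * (L * R)) := by rw [smul_mul_assoc, smul_smul, mul_assoc]
      _ = K * (L * R) := by rw [mul_inv_cancel₀ hq0, one_smul]
  have key : (q + 1)⁻¹ • (R * L * (L * R)) = (q + 1)⁻¹ • (L * R * (R * L)) := by
    have : (q + 1)⁻¹ • (R * L * (L * R)) - (q + 1)⁻¹ • (L * R * (R * L))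
        = R * ((q * (q + 1)⁻¹) • (R * L * L) - L * R * L + (q + 1)⁻¹ • (L * L * R) + L * K)
          - ((q * (q + 1)⁻¹) • (R * R * L) - R * L * R + (q + 1)⁻¹ • (L * R * R) + K * R) * L
          - (R * L * K - K * (R * L)) := by
      noncomm_ring
    rw [h3, h4, c1, mul_zero, zero_mul] at this
    simpa [sub_eq_zero] using this
  have comm1 : Commute (R * L) (L * R) := by
    have := congrArg (fun x : A => (q + 1) • x) key
    simpa [smul_smul, mul_inv_cancel₀ hq1n, Commute, SemiconjBy] using this
  have cKi : ∀ X : A, X * K = K * X → Commute X Ki := by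
    intro X hX
    have : Ki * (X * K) * Ki = Ki * (K * X) * Ki := by rw [hX]
    calc X * Ki = Ki * (K * X) * Ki := by rw [← mul_assoc, hK', one_mul]
      _ = Ki * (X * K) * Ki := by rw [hX]
      _ = Ki * X * (K * Ki) := by rw [mul_assoc, mul_assoc, mul_assoc]
      _ = Ki * X := by rw [hK, mul_one]
  refine ⟨comm1, c1, cKi _ c1, c2, cKi _ c2, by rw [Commute, SemiconjBy, hK, hK']⟩
end

section
/- Let R, L, K be elements of an associative algebra over ℂ with K invertible, satisfying RK = qKR, LK = q⁻¹KL, q(q+1)⁻¹RL² − LRL + (q+1)⁻¹L²R + LK = 0, and q(q+1)⁻¹R²L − RLR + (q+1)⁻¹LR² + KR = 0, where q ≠ 0, ±1. Define C₁ = q⁻¹(q−1)⁻¹(q+1)K + RL − q⁻¹LR and C₂ = K² + (q−1)RLK − (q−1)LRK. Then C₁ commutes with each of R, L, K, and C₂ commutes with each of R, L, K. -/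
theorem stmt_4 (A : Type*) [Ring A] [Algebra ℂ A] (q : ℂ)
    (hq0 : q ≠ 0) (hq1 : q ≠ 1) (hq1' : q ≠ -1)
    (R L K : A) (hK : IsUnit K)
    (h1 : R * K = q • (K * R))
    (h2 : L * K = q⁻¹ • (K * L))
    (h3 : (q * (q + 1)⁻¹) • (R * L * L) - L * R * L + (q + 1)⁻¹ • (L * L * R) + L * K = 0)
    (h4 : (q * (q + 1)⁻¹) • (R * R * L) - R * L * R + (q + 1)⁻¹ • (L * R * R) + K * R = 0)
    (C₁ C₂ : A)
    (hC₁ : C₁ = (q⁻¹ * (q - 1)⁻¹ * (q + 1)) • K + R * L - q⁻¹ • (L * R))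
    (hC₂ : C₂ = K * K + (q - 1) • (R * L * K) - (q - 1) • (L * R * K)) :
    (Commute C₁ R ∧ Commute C₁ L ∧ Commute C₁ K) ∧
    (Commute C₂ R ∧ Commute C₂ L ∧ Commute C₂ K) := by
  have hq1n : q - 1 ≠ 0 := sub_ne_zero.mpr hq1
  have hq1p : q + 1 ≠ 0 := by
    intro h; exact hq1' (by linear_combination h)
  have hR : ∀ X : A, R * (K * X) = q • (K * (R * X)) := by
    intro X; rw [← mul_assoc, h1, smul_mul_assoc, mul_assoc]
  have hL : ∀ X : A, L * (K * X) = q⁻¹ • (K * (L * X)) := by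
    intro X; rw [← mul_assoc, h2, smul_mul_assoc, mul_assoc]
  have key1R : C₁ * R - R * C₁ =
      (-(q + 1) / q) • ((q * (q + 1)⁻¹) • (R * R * L) - R * L * R
        + (q + 1)⁻¹ • (L * R * R) + K * R) := by
    rw [hC₁]
    simp only [add_mul, mul_add, sub_mul, mul_sub, smul_mul_assoc, mul_smul_comm,
      smul_add, smul_sub, smul_smul, mul_assoc, h1, h2, hR, hL, mul_smul_comm, smul_smul]
    match_scalars
    all_goals field_simp
    all_goals try rw [div_eq_iff (by simp [mul_eq_zero, hq0, hq1n, hq1p])]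
    all_goals ring
  have key1L : C₁ * L - L * C₁ =
      ((q + 1) / q) • ((q * (q + 1)⁻¹) • (R * L * L) - L * R * L
        + (q + 1)⁻¹ • (L * L * R) + L * K) := by
    rw [hC₁]
    simp only [add_mul, mul_add, sub_mul, mul_sub, smul_mul_assoc, mul_smul_comm,
      smul_add, smul_sub, smul_smul, mul_assoc, h1, h2, hR, hL, mul_smul_comm, smul_smul]
    match_scalars
    all_goals field_simp
    all_goals try rw [div_eq_iff (by simp [mul_eq_zero, hq0, hq1n, hq1p])]
    all_goals ring
  have key2R : C₂ * R - R * C₂ =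
      (-(q * q - 1)) • (K * ((q * (q + 1)⁻¹) • (R * R * L) - R * L * R
        + (q + 1)⁻¹ • (L * R * R) + K * R)) := by
    rw [hC₂]
    simp only [add_mul, mul_add, sub_mul, mul_sub, smul_mul_assoc, mul_smul_comm,
      smul_add, smul_sub, smul_smul, mul_assoc, h1, h2, hR, hL, mul_smul_comm, smul_smul]
    match_scalars
    all_goals field_simp
    all_goals try rw [div_eq_iff (by simp [mul_eq_zero, hq0, hq1n, hq1p])]
    all_goals ring
  have key2L : C₂ * L - L * C₂ =
      ((q - 1) * (q + 1) / q) • (K * ((q * (q + 1)⁻¹) • (R * L * L) - L * R * L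
        + (q + 1)⁻¹ • (L * L * R) + L * K)) := by
    rw [hC₂]
    simp only [add_mul, mul_add, sub_mul, mul_sub, smul_mul_assoc, mul_smul_comm,
      smul_add, smul_sub, smul_smul, mul_assoc, h1, h2, hR, hL, mul_smul_comm, smul_smul]
    match_scalars
    all_goals field_simp
    all_goals try rw [div_eq_iff (by simp [mul_eq_zero, hq0, hq1n, hq1p])]
    all_goals ring
  have cRLK : Commute (R * L) K := by
    show (R * L) * K = K * (R * L)
    rw [mul_assoc, h2, mul_smul_comm, hR, smul_smul, inv_mul_cancel₀ hq0, one_smul]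
  have cLRK : Commute (L * R) K := by
    show (L * R) * K = K * (L * R)
    rw [mul_assoc, h1, mul_smul_comm, hL, smul_smul, mul_inv_cancel₀ hq0, one_smul]
  have c1R : Commute C₁ R := by
    have h := key1R; rw [h4, smul_zero, sub_eq_zero] at h; exact h
  have c1L : Commute C₁ L := by
    have h := key1L; rw [h3, smul_zero, sub_eq_zero] at h; exact h
  have c2R : Commute C₂ R := by
    have h := key2R; rw [h4, mul_zero, smul_zero, sub_eq_zero] at h; exact h
  have c2L : Commute C₂ L := by
    have h := key2L; rw [h3, mul_zero, smul_zero, sub_eq_zero] at h; exact h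
  have c1K : Commute C₁ K := by
    rw [hC₁]
    exact (((Commute.refl K).smul_left _).add_left cRLK).sub_left (cLRK.smul_left _)
  have c2K : Commute C₂ K := by
    rw [hC₂]
    exact (((Commute.refl K).mul_left (Commute.refl K)).add_left
      ((cRLK.mul_left (Commute.refl K)).smul_left _)).sub_left
      ((cLRK.mul_left (Commute.refl K)).smul_left _)
  exact ⟨⟨c1R, c1L, c1K⟩, c2R, c2L, c2K⟩
end

section
/- Let d ≥ 0, let q be a nonzero scalar not a root of unity, let r, N, M be integers, and let W be a complex vector space with basis w₀, …, w_d. Define operators R, L, K on W by: R w_i = w_{i+1} for 0 ≤ i ≤ d−1, R w_d = 0; L w_i = x_{r+i} w_{i−1} for 1 ≤ i ≤ d with x_{r+i} = q^{N+M−r−d}(q^i − 1)(q^{d+1−i} − 1)/(q−1)², L w₀ = 0; K w_i = q^{N+M−r−i} w_i. Then the operators C₁ = q⁻¹(q−1)⁻¹(q+1)K + RL − q⁻¹LR and C₂ = K² + (q−1)RLK − (q−1)LRK act on W as the scalars (q−1)⁻¹ q^{N+M−r}(1 + q^{−d−1}) and q^{2N+2M−2r−d} respectively. -/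
set_option maxHeartbeats 1000000


theorem stmt_6 (d : ℕ) (q : ℂ) (hq0 : q ≠ 0) (hq : ∀ n : ℕ, 0 < n → q ^ n ≠ 1)
    (r N M : ℤ) (V : Type*) [AddCommGroup V] [Module ℂ V] (w : ℕ → V)
    (hspan : Submodule.span ℂ (w '' {i | i ≤ d}) = ⊤)
    (R L K : Module.End ℂ V)
    (hR : ∀ i < d, R (w i) = w (i + 1)) (hRd : R (w d) = 0)
    (hL : ∀ i, 1 ≤ i → i ≤ d →
      L (w i) = (q ^ (N + M - r - (d : ℤ)) * (q ^ i - 1) * (q ^ (d + 1 - i) - 1)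
        * (((q - 1) ^ 2)⁻¹)) • w (i - 1))
    (hL0 : L (w 0) = 0)
    (hK : ∀ i ≤ d, K (w i) = (q ^ (N + M - r - (i : ℤ))) • w i) :
    ∀ v : V,
      ((q⁻¹ * (q - 1)⁻¹ * (q + 1)) • K + R * L - q⁻¹ • (L * R)) v
        = ((q - 1)⁻¹ * q ^ (N + M - r) * (1 + q ^ (-(d : ℤ) - 1))) • v
      ∧ (K * K + (q - 1) • (R * L * K) - (q - 1) • (L * R * K)) v
        = (q ^ (2 * N + 2 * M - 2 * r - (d : ℤ))) • v := by
  have hq1 : q - 1 ≠ 0 := sub_ne_zero.mpr (by simpa using hq 1 one_pos)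
  set e := q ^ (N + M - r - (d : ℤ)) with he
  have he0 : e ≠ 0 := zpow_ne_zero _ hq0
  have hk : ∀ i ≤ d, q ^ (N + M - r - (i : ℤ)) = e * q ^ (d - i) := by
    intro i hi
    rw [he, ← zpow_natCast q (d - i), ← zpow_add₀ hq0]
    congr 1
    have : ((d - i : ℕ) : ℤ) = (d : ℤ) - (i : ℤ) := by
      push_cast [Nat.cast_sub hi]; ring
    rw [this]; ring
  have hT : q ^ (N + M - r) = e * q ^ d := by
    rw [he, ← zpow_natCast q d, ← zpow_add₀ hq0]
    congr 1; ring
  have hT2 : q ^ (2 * N + 2 * M - 2 * r - (d : ℤ)) = e * e * q ^ d := by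
    rw [he, ← zpow_natCast q d, ← zpow_add₀ hq0, ← zpow_add₀ hq0]
    congr 1; ring
  have hneg : q ^ (-(d : ℤ) - 1) = (q ^ (d + 1))⁻¹ := by
    rw [show (-(d : ℤ) - 1) = -((d + 1 : ℕ) : ℤ) by push_cast; ring, zpow_neg, zpow_natCast]
  have main : ∀ i ≤ d,
      ((q⁻¹ * (q - 1)⁻¹ * (q + 1)) • K + R * L - q⁻¹ • (L * R)) (w i)
        = ((q - 1)⁻¹ * q ^ (N + M - r) * (1 + q ^ (-(d : ℤ) - 1))) • w i
      ∧ (K * K + (q - 1) • (R * L * K) - (q - 1) • (L * R * K)) (w i)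
        = (q ^ (2 * N + 2 * M - 2 * r - (d : ℤ))) • w i := by
    intro i hi
    have hKi := hK i hi
    rw [hk i hi] at hKi
    by_cases hid : i = d
    · subst hid
      -- now the old `d` is called `i`
      by_cases hd0 : i = 0
      · subst hd0
        constructor
        · simp only [LinearMap.add_apply, LinearMap.sub_apply, LinearMap.smul_apply,
            Module.End.mul_apply, hL0, hRd, hKi, map_zero, map_smul, smul_zero,
            Nat.sub_zero, pow_zero]
          rw [hT, hneg]
          match_scalars
          field_simp
          try ring
        · simp only [Module.End.mul_apply, LinearMap.add_apply, LinearMap.sub_apply,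
            LinearMap.smul_apply, hL0, hRd, hKi, map_zero, map_smul, smul_zero,
            Nat.sub_zero, pow_zero]
          rw [hT2]
          match_scalars
          field_simp
          try ring
      · -- endpoint case: apply at w i where i is the diameter, i ≥ 1
        have hLd := hL i (by omega) le_rfl
        have hRL : R (L (w i)) = (e * (q ^ i - 1) * (q ^ (i + 1 - i) - 1)
            * (((q - 1) ^ 2)⁻¹)) • w i := by
          rw [hLd, map_smul, hR (i - 1) (by omega)]
          congr 2 <;> omega
        rw [show i + 1 - i = 1 by omega, pow_one] at hRL
        rw [Nat.sub_self, pow_zero, mul_one] at hKi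
        constructor
        · simp only [LinearMap.add_apply, LinearMap.sub_apply, LinearMap.smul_apply,
            Module.End.mul_apply, hRd, hKi, hRL, map_zero, map_smul, smul_zero]
          rw [hT, hneg, pow_succ]
          match_scalars
          field_simp
          try ring
        · simp only [Module.End.mul_apply, LinearMap.add_apply, LinearMap.sub_apply,
            LinearMap.smul_apply, hKi, map_smul, hRd, hRL, map_zero, smul_zero]
          rw [hT2]
          match_scalars
          field_simp
          try ring
    · -- i < d
      have hid' : i < d := lt_of_le_of_ne hi hid
      have hLR : L (R (w i)) = (e * (q ^ (i + 1) - 1) * (q ^ (d - i) - 1)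
          * (((q - 1) ^ 2)⁻¹)) • w i := by
        rw [hR i hid', hL (i + 1) (by omega) (by omega)]
        rw [show d + 1 - (i + 1) = d - i by omega]
        congr 2 <;> omega
      have hab : q ^ i * q ^ (d - i) = q ^ d := by
        rw [← pow_add]; congr 1; omega
      by_cases hi0 : i = 0
      · subst hi0
        constructor
        · simp only [LinearMap.add_apply, LinearMap.sub_apply, LinearMap.smul_apply,
            Module.End.mul_apply, hL0, hKi, hLR, map_zero, map_smul, smul_zero]
          rw [hT, hneg, pow_succ]
          simp only [Nat.sub_zero, pow_zero, pow_one] at *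
          match_scalars
          field_simp
          try ring
        · simp only [Module.End.mul_apply, LinearMap.add_apply, LinearMap.sub_apply,
            LinearMap.smul_apply, hKi, map_smul, hL0, hLR, map_zero, smul_zero]
          rw [hT2]
          simp only [Nat.sub_zero, pow_zero, pow_one] at *
          match_scalars
          field_simp
          try ring
      · -- 1 ≤ i < d
        have hRL : R (L (w i)) = (e * (q ^ i - 1) * (q ^ (d + 1 - i) - 1)
            * (((q - 1) ^ 2)⁻¹)) • w i := by
          rw [hL i (by omega) hi, map_smul, hR (i - 1) (by omega)]
          congr 2 <;> omega
        rw [show d + 1 - i = (d - i) + 1 by omega, pow_succ] at hRL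
        constructor
        · simp only [LinearMap.add_apply, LinearMap.sub_apply, LinearMap.smul_apply,
            Module.End.mul_apply, hKi, hRL, hLR, map_smul]
          rw [hT, hneg, show d + 1 = (i + (d - i)) + 1 by omega, ← hab]
          simp only [pow_succ, pow_add]
          set b := q ^ (d - i) with hb
          set a := q ^ i with ha
          have ha0 : a ≠ 0 := by rw [ha]; exact pow_ne_zero _ hq0
          have hb0 : b ≠ 0 := by rw [hb]; exact pow_ne_zero _ hq0
          match_scalars
          field_simp
          ring
        · simp only [Module.End.mul_apply, LinearMap.add_apply, LinearMap.sub_apply,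
            LinearMap.smul_apply, hKi, map_smul, hRL, hLR]
          rw [hT2, ← hab]
          simp only [pow_succ, pow_add]
          set b := q ^ (d - i) with hb
          set a := q ^ i with ha
          have ha0 : a ≠ 0 := by rw [ha]; exact pow_ne_zero _ hq0
          have hb0 : b ≠ 0 := by rw [hb]; exact pow_ne_zero _ hq0
          match_scalars
          field_simp
          ring
  have h1 : ((q⁻¹ * (q - 1)⁻¹ * (q + 1)) • K + R * L - q⁻¹ • (L * R))
      = ((q - 1)⁻¹ * q ^ (N + M - r) * (1 + q ^ (-(d : ℤ) - 1))) • (1 : Module.End ℂ V) := by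
    apply LinearMap.ext_on hspan
    rintro x ⟨i, hi, rfl⟩
    simpa using (main i hi).1
  have h2 : (K * K + (q - 1) • (R * L * K) - (q - 1) • (L * R * K))
      = (q ^ (2 * N + 2 * M - 2 * r - (d : ℤ))) • (1 : Module.End ℂ V) := by
    apply LinearMap.ext_on hspan
    rintro x ⟨i, hi, rfl⟩
    simpa using (main i hi).2
  intro v
  constructor
  · rw [h1]; simp
  · rw [h2]; simp
end

section
/- Let N ≥ 6 and let q ≥ 2 be an integer. Suppose ξ₀, …, ξ_{N−1} are nonzero complex numbers satisfying, for 1 ≤ i ≤ N−3, both ξ_{i−1} − 3ξ_i + 3ξ_{i+1} − ξ_{i+2} = 0 and q⁻¹ξ_{i−1} − 3ξ_{i+1} + (q+1)ξ_{i+2} = 0. Then there is a contradiction; i.e., no such sequence of nonzero complex numbers exists. -/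
theorem stmt_11 (N q : ℕ) (hN : 6 ≤ N) (hq : 2 ≤ q) (ξ : ℕ → ℂ)
    (hnz : ∀ i < N, ξ i ≠ 0)
    (h1 : ∀ i, 1 ≤ i → i ≤ N - 3 →
        ξ (i - 1) - 3 * ξ i + 3 * ξ (i + 1) - ξ (i + 2) = 0)
    (h2 : ∀ i, 1 ≤ i → i ≤ N - 3 →
        (q : ℂ)⁻¹ * ξ (i - 1) - 3 * ξ (i + 1) + ((q : ℂ) + 1) * ξ (i + 2) = 0) :
    False := by
  set r : ℂ := (q : ℂ) with hr_def
  have hq0 : q ≠ 0 := by omega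
  have hr : r ≠ 0 := by exact_mod_cast Nat.cast_ne_zero.mpr hq0
  have hr1 : r - 1 ≠ 0 := by
    intro h
    have h' : r = 1 := sub_eq_zero.mp h
    rw [hr_def] at h'
    have : q = 1 := Nat.cast_eq_one.mp h'
    omega
  have e1 := h1 1 (by norm_num) (by omega)
  have e2 := h1 2 (by norm_num) (by omega)
  have e3 := h1 3 (by norm_num) (by omega)
  have hc := mul_inv_cancel₀ hr
  have f1 : ξ 0 - 3*r*ξ 2 + r*(r+1)*ξ 3 = 0 := by
    have h := h2 1 (by norm_num) (by omega)
    linear_combination r * h - ξ 0 * hc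
  have f2 : ξ 1 - 3*r*ξ 3 + r*(r+1)*ξ 4 = 0 := by
    have h := h2 2 (by norm_num) (by omega)
    linear_combination r * h - ξ 1 * hc
  have f3 : ξ 2 - 3*r*ξ 4 + r*(r+1)*ξ 5 = 0 := by
    have h := h2 3 (by norm_num) (by omega)
    linear_combination r * h - ξ 2 * hc
  simp only [show (1:ℕ)-1 = 0 from rfl, show (2:ℕ)-1 = 1 from rfl,
    show (3:ℕ)-1 = 2 from rfl] at e1 e2 e3
  norm_num at e1 e2 e3
  have g1 : (r^2+r+1)*ξ 0 - (3*r^2+3*r)*ξ 1 + 3*r^2*ξ 2 = 0 := by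
    linear_combination f1 + r*(r+1)*e1
  have g2 : 3*r^2*ξ 0 + (1+r-8*r^2)*ξ 1 + (6*r^2-3*r)*ξ 2 = 0 := by
    linear_combination f2 + 3*r^2*e1 + r*(r+1)*e2
  have g3 : (6*r^2-3*r)*ξ 0 + (9*r-15*r^2)*ξ 1 + (10*r^2-8*r+1)*ξ 2 = 0 := by
    linear_combination f3 + (6*r^2-3*r)*e1 + 3*r^2*e2 + r*(r+1)*e3
  have key : (r-1)^6 * ξ 0 = 0 := by
    linear_combination (10*r^4-25*r^3+21*r^2-7*r+1)*g1
      + (-15*r^4+33*r^3-21*r^2+3*r)*g2 + (6*r^4-12*r^3+6*r^2)*g3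
  have : ξ 0 = 0 := by
    have h6 : (r-1)^6 ≠ 0 := pow_ne_zero _ hr1
    exact (mul_eq_zero.mp key).resolve_left h6
  exact hnz 0 (by omega) this
end

section
/- Let q ≥ 2 be an integer, let Q be a nonzero complex number with Q^i ≠ 1 for 1 ≤ i ≤ N (N ≥ 6), and let x, y, z ∈ ℂ be such that ξ_i = x + yQ^i + zQ^{−i} is nonzero for 0 ≤ i ≤ N−1 and q⁻¹ξ_{i−1} − (Q + Q⁻¹ + 1)ξ_{i+1} + (q+1)ξ_{i+2} = 0 for 1 ≤ i ≤ N−3. Then (1 − qQ)(1 − qQ⁻¹)x = 0, (q⁻¹Q⁻¹ − Q)(1 − qQ)y = 0, (q⁻¹Q − Q⁻¹)(1 − qQ⁻¹)z = 0, and moreover yz = 0. -/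
theorem stmt_14 (N q : ℕ) (hN : 6 ≤ N) (hq : 2 ≤ q) (Q x y z : ℂ)
    (hQ0 : Q ≠ 0) (hQ : ∀ i : ℕ, 1 ≤ i → i ≤ N → Q ^ i ≠ 1) (ξ : ℕ → ℂ)
    (hξ : ∀ i, ξ i = x + y * Q ^ i + z * (Q⁻¹) ^ i)
    (hnz : ∀ i < N, ξ i ≠ 0)
    (hrec : ∀ i, 1 ≤ i → i ≤ N - 3 →
        (q : ℂ)⁻¹ * ξ (i - 1) - (Q + Q⁻¹ + 1) * ξ (i + 1)
          + ((q : ℂ) + 1) * ξ (i + 2) = 0) :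
    (1 - (q : ℂ) * Q) * (1 - (q : ℂ) * Q⁻¹) * x = 0
    ∧ ((q : ℂ)⁻¹ * Q⁻¹ - Q) * (1 - (q : ℂ) * Q) * y = 0
    ∧ ((q : ℂ)⁻¹ * Q - Q⁻¹) * (1 - (q : ℂ) * Q⁻¹) * z = 0
    ∧ y * z = 0 := by
  have hqC : (q:ℂ) ≠ 0 := by
    simp only [ne_eq, Nat.cast_eq_zero]; omega
  have hQ1 : Q - 1 ≠ 0 := sub_ne_zero.mpr (by simpa using hQ 1 le_rfl (by omega))
  have hQ2 : Q ^ 2 - 1 ≠ 0 := sub_ne_zero.mpr (hQ 2 (by omega) (by omega))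
  have h1 := hrec 1 le_rfl (by omega)
  have h2 := hrec 2 (by omega) (by omega)
  have h3 := hrec 3 (by omega) (by omega)
  simp only [hξ] at h1 h2 h3
  norm_num at h1 h2 h3
  field_simp at h1 h2 h3
  -- abbreviations (expanded): U = x*((1-qQ)*(Q-q)), V = y*((1-qQ)*(1-qQ^2)), W = z*((Q^2-q)*(Q-q))
  have E1 : Q ^ 9 * (x * ((1 - (q:ℂ) * Q) * (Q - q)) * Q ^ 2
      + y * ((1 - (q:ℂ) * Q) * (1 - (q:ℂ) * Q ^ 2)) * Q ^ 3
      + z * ((Q ^ 2 - (q:ℂ)) * (Q - q))) = 0 := by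
    linear_combination Q ^ 9 * h1
  have E2 : Q ^ 9 * (x * ((1 - (q:ℂ) * Q) * (Q - q)) * Q ^ 3
      + y * ((1 - (q:ℂ) * Q) * (1 - (q:ℂ) * Q ^ 2)) * Q ^ 5
      + z * ((Q ^ 2 - (q:ℂ)) * (Q - q))) = 0 := by
    linear_combination Q ^ 9 * h2
  have E3 : Q ^ 9 * (x * ((1 - (q:ℂ) * Q) * (Q - q)) * Q ^ 4
      + y * ((1 - (q:ℂ) * Q) * (1 - (q:ℂ) * Q ^ 2)) * Q ^ 7
      + z * ((Q ^ 2 - (q:ℂ)) * (Q - q))) = 0 := by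
    linear_combination Q ^ 9 * h3
  have cancel : ∀ a b : ℂ, a ≠ 0 → a * b = 0 → b = 0 := fun a b ha h =>
    (mul_eq_zero.mp h).resolve_left ha
  have hQ9 : Q ^ 9 ≠ 0 := pow_ne_zero _ hQ0
  have hQ11 : Q ^ 11 ≠ 0 := pow_ne_zero _ hQ0
  have hQ12 : Q ^ 12 ≠ 0 := pow_ne_zero _ hQ0
  have s1 : x * ((1 - (q:ℂ) * Q) * (Q - q))
      + y * ((1 - (q:ℂ) * Q) * (1 - (q:ℂ) * Q ^ 2)) * (Q ^ 2 + Q) = 0 := by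
    have d1 : Q ^ 11 * ((Q - 1) * (x * ((1 - (q:ℂ) * Q) * (Q - q))
        + y * ((1 - (q:ℂ) * Q) * (1 - (q:ℂ) * Q ^ 2)) * (Q ^ 2 + Q))) = 0 := by
      linear_combination E2 - E1
    exact cancel _ _ hQ1 (cancel _ _ hQ11 d1)
  have s2 : x * ((1 - (q:ℂ) * Q) * (Q - q))
      + y * ((1 - (q:ℂ) * Q) * (1 - (q:ℂ) * Q ^ 2)) * (Q ^ 3 + Q ^ 2) = 0 := by
    have d2 : Q ^ 12 * ((Q - 1) * (x * ((1 - (q:ℂ) * Q) * (Q - q))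
        + y * ((1 - (q:ℂ) * Q) * (1 - (q:ℂ) * Q ^ 2)) * (Q ^ 3 + Q ^ 2))) = 0 := by
      linear_combination E3 - E2
    exact cancel _ _ hQ1 (cancel _ _ hQ12 d2)
  have hV : y * ((1 - (q:ℂ) * Q) * (1 - (q:ℂ) * Q ^ 2)) = 0 := by
    have d3 : Q * ((Q ^ 2 - 1) * (y * ((1 - (q:ℂ) * Q) * (1 - (q:ℂ) * Q ^ 2)))) = 0 := by
      linear_combination s2 - s1
    exact cancel _ _ hQ2 (cancel _ _ hQ0 d3)
  have hU : x * ((1 - (q:ℂ) * Q) * (Q - q)) = 0 := by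
    linear_combination s1 - (Q ^ 2 + Q) * hV
  have hW : z * ((Q ^ 2 - (q:ℂ)) * (Q - q)) = 0 := by
    have := cancel _ _ hQ9 E1
    linear_combination this - Q ^ 2 * hU - Q ^ 3 * hV
  refine ⟨?_, ?_, ?_, ?_⟩
  · have e : (1 - (q:ℂ) * Q) * (1 - (q:ℂ) * Q⁻¹) * x
        = Q⁻¹ * (x * ((1 - (q:ℂ) * Q) * (Q - q))) := by
      field_simp
    rw [e, hU, mul_zero]
  · have e : ((q:ℂ)⁻¹ * Q⁻¹ - Q) * (1 - (q:ℂ) * Q) * y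
        = (q:ℂ)⁻¹ * Q⁻¹ * (y * ((1 - (q:ℂ) * Q) * (1 - (q:ℂ) * Q ^ 2))) := by
      field_simp
    rw [e, hV, mul_zero]
  · have e : ((q:ℂ)⁻¹ * Q - Q⁻¹) * (1 - (q:ℂ) * Q⁻¹) * z
        = (q:ℂ)⁻¹ * (Q⁻¹) ^ 2 * (z * ((Q ^ 2 - (q:ℂ)) * (Q - q))) := by
      field_simp
    rw [e, hW, mul_zero]
  · by_contra hyz
    have hy : y ≠ 0 := fun h => hyz (by simp [h])
    have hz : z ≠ 0 := fun h => hyz (by simp [h])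
    have hv2 : (1 - (q:ℂ) * Q) * (1 - (q:ℂ) * Q ^ 2) = 0 := cancel _ _ hy hV
    have hw2 : (Q ^ 2 - (q:ℂ)) * (Q - q) = 0 := cancel _ _ hz hW
    have hq2 : (q:ℂ) ^ 2 ≠ 1 := by
      intro h
      have h' : q ^ 2 = 1 := by exact_mod_cast h
      have := Nat.pow_le_pow_left hq 2
      omega
    have hq3 : (q:ℂ) ^ 3 ≠ 1 := by
      intro h
      have h' : q ^ 3 = 1 := by exact_mod_cast h
      have := Nat.pow_le_pow_left hq 3
      omega
    rcases mul_eq_zero.mp hv2 with ha | ha <;> rcases mul_eq_zero.mp hw2 with hb | hb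
    · exact hq3 (by linear_combination (-(q:ℂ) ^ 2) * hb - (1 + (q:ℂ) * Q) * ha)
    · exact hq2 (by linear_combination (-(q:ℂ)) * hb - ha)
    · exact hq2 (by linear_combination (-(q:ℂ)) * hb - ha)
    · exact hq3 (by linear_combination (-1 : ℂ) * ha - ((q:ℂ) * (Q + q)) * hb)
end

section
/- In the setting of the attenuated space poset A_q(N,M), the matrices L, S, R satisfy LS − qSL = (q^M − 1)L and SR − qRS = (q^M − 1)R. -/
open scoped Classical

/-- The attenuated space poset: subspaces of `H` intersecting `h` trivially. -/
abbrev AttP (F : Type) [Field F] (H : Type) [AddCommGroup H] [Module F H]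
    (h : Submodule F H) : Type := {x : Submodule F H // x ⊓ h = ⊥}

instance attPFinite (F : Type) [Field F] (H : Type) [AddCommGroup H] [Module F H]
    [Finite H] (h : Submodule F H) : Finite (AttP F H h) := by
  have : Finite (Submodule F H) :=
    Finite.of_injective (fun s => (s : Set H)) SetLike.coe_injective
  exact Subtype.finite

noncomputable instance attPFintype (F : Type) [Field F] (H : Type) [AddCommGroup H]
    [Module F H] [Finite H] (h : Submodule F H) : Fintype (AttP F H h) :=
  Fintype.ofFinite _

open Module Submodule

set_option linter.unusedSectionVars false
set_option linter.unusedVariables false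

section Aux

variable {F : Type} [Field F] {H : Type} [AddCommGroup H] [Module F H]
  [FiniteDimensional F H]

private lemma aux_smul_mem (x : Submodule F H) {u : H} (hu : u ∉ x) {c : F}
    (hc : c • u ∈ x) : c = 0 := by
  by_contra hc0
  exact hu (by simpa [smul_smul, inv_mul_cancel₀ hc0] using x.smul_mem c⁻¹ hc)

private lemma aux_inf_span_eq_bot (x : Submodule F H) {w : H} (hw : w ∉ x) :
    x ⊓ Submodule.span F {w} = ⊥ := by
  rw [eq_bot_iff]
  intro v hv
  rw [Submodule.mem_inf] at hv
  obtain ⟨hvx, hvs⟩ := hv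
  rw [Submodule.mem_span_singleton] at hvs
  obtain ⟨c, rfl⟩ := hvs
  have : c = 0 := aux_smul_mem x hw hvx
  simp [this]

private lemma aux_mem_sup_span {x : Submodule F H} {w v : H} :
    v ∈ x ⊔ Submodule.span F {w} ↔ ∃ ξ ∈ x, ∃ c : F, ξ + c • w = v := by
  simp only [Submodule.mem_sup, Submodule.mem_span_singleton]
  constructor
  · rintro ⟨ξ, hξ, _, ⟨c, rfl⟩, rfl⟩
    exact ⟨ξ, hξ, c, rfl⟩
  · rintro ⟨ξ, hξ, c, rfl⟩
    exact ⟨ξ, hξ, c • w, ⟨c, rfl⟩, rfl⟩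

private lemma aux_frk_sup_span (x : Submodule F H) {w : H} (hw : w ∉ x) :
    finrank F ↥(x ⊔ Submodule.span F {w}) = finrank F ↥x + 1 := by
  have hw0 : w ≠ 0 := fun h0 => hw (h0 ▸ x.zero_mem)
  have h2 := Submodule.finrank_sup_add_finrank_inf_eq x (Submodule.span F {w})
  rw [aux_inf_span_eq_bot x hw, finrank_bot, finrank_span_singleton hw0] at h2
  omega

private lemma aux_sup_span_shift_le (x : Submodule F H) {ξ : H} (m : H) (hξ : ξ ∈ x) :
    x ⊔ Submodule.span F {ξ + m} ≤ x ⊔ Submodule.span F {m} := by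
  refine sup_le le_sup_left ?_
  rw [Submodule.span_le, Set.singleton_subset_iff]
  exact add_mem (Submodule.mem_sup_left hξ)
    (Submodule.mem_sup_right (Submodule.mem_span_singleton_self m))

private lemma aux_sup_span_shift (x : Submodule F H) {ξ : H} (m : H) (hξ : ξ ∈ x) :
    x ⊔ Submodule.span F {ξ + m} = x ⊔ Submodule.span F {m} := by
  refine le_antisymm (aux_sup_span_shift_le x m hξ) ?_
  have := aux_sup_span_shift_le x (ξ + m) (x.neg_mem hξ)
  simpa using this

private lemma aux_sup_singleton_inf (h : Submodule F H) (y : Submodule F H)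
    (hyh : y ⊓ h = ⊥) {v : H} (hv : v ∈ h) :
    (y ⊔ Submodule.span F {v}) ⊓ h = Submodule.span F {v} := by
  apply le_antisymm
  · intro a ha
    rw [Submodule.mem_inf] at ha
    obtain ⟨hab, hah⟩ := ha
    rw [aux_mem_sup_span] at hab
    obtain ⟨η, hη, c, rfl⟩ := hab
    have hmem : η ∈ y ⊓ h := by
      refine Submodule.mem_inf.2 ⟨hη, ?_⟩
      simpa using sub_mem hah (h.smul_mem c hv)
    rw [hyh, Submodule.mem_bot] at hmem
    rw [hmem, zero_add]
    exact Submodule.smul_mem _ c (Submodule.mem_span_singleton_self v)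
  · exact le_inf le_sup_right ((Submodule.span_le).2 (Set.singleton_subset_iff.2 hv))

/-- If `x ⊓ h = ⊥`, `u ∉ x ⊔ span v`, `m ∈ span v`, and everything lives in `W` with
`W ⊓ h ≤ span v`, then `(x ⊔ span (u+m)) ⊓ h = ⊥`. -/
private lemma aux_z_inf_h (h : Submodule F H) {x W : Submodule F H} {u v m : H}
    (hxh : x ⊓ h = ⊥) (hxW : x ≤ W) (hWh : W ⊓ h ≤ Submodule.span F {v})
    (hu : u ∉ x ⊔ Submodule.span F {v}) (huW : u ∈ W) (hvW : v ∈ W)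
    (hm : m ∈ Submodule.span F {v}) :
    (x ⊔ Submodule.span F {u + m}) ⊓ h = ⊥ := by
  obtain ⟨s, rfl⟩ := Submodule.mem_span_singleton.1 hm
  rw [eq_bot_iff]
  intro a ha
  rw [Submodule.mem_inf] at ha
  obtain ⟨haz, hah⟩ := ha
  have hzW : x ⊔ Submodule.span F {u + s • v} ≤ W := by
    refine sup_le hxW ?_
    rw [Submodule.span_le, Set.singleton_subset_iff]
    exact add_mem huW (W.smul_mem s hvW)
  have haspan : a ∈ Submodule.span F {v} := hWh (Submodule.mem_inf.2 ⟨hzW haz, hah⟩)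
  obtain ⟨c, hc⟩ := Submodule.mem_span_singleton.1 haspan
  rw [aux_mem_sup_span] at haz
  obtain ⟨ξ, hξ, c', hc'⟩ := haz
  -- c' • u = c • v - ξ - (c' * s) • v
  rw [← hc] at hc'
  rw [smul_add, smul_smul] at hc'
  have e : c' • u = c • v - ξ - (c' * s) • v := by
    rw [← hc']
    abel
  have hmem : c' • u ∈ x ⊔ Submodule.span F {v} := by
    rw [e]
    exact sub_mem
      (sub_mem (Submodule.mem_sup_right (Submodule.smul_mem _ c
        (Submodule.mem_span_singleton_self v))) (Submodule.mem_sup_left hξ))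
      (Submodule.mem_sup_right (Submodule.smul_mem _ _
        (Submodule.mem_span_singleton_self v)))
  have hc'0 : c' = 0 := aux_smul_mem _ hu hmem
  rw [hc'0] at hc'
  simp only [zero_smul, zero_mul, add_zero] at hc'
  rw [← hxh]
  refine Submodule.mem_inf.2 ⟨?_, hah⟩
  rw [← hc, ← hc']
  exact hξ

/-- Injectivity of the parametrization `m ↦ x ⊔ span (u + m)` for `m ∈ span v`. -/
private lemma aux_param_inj {x : Submodule F H} {u v m m' : H}
    (hu : u ∉ x ⊔ Submodule.span F {v}) (hv : v ∉ x)
    (hm : m ∈ Submodule.span F {v}) (hm' : m' ∈ Submodule.span F {v})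
    (heq : x ⊔ Submodule.span F {u + m} = x ⊔ Submodule.span F {u + m'}) : m = m' := by
  have h1 : u + m' ∈ x ⊔ Submodule.span F {u + m} := by
    rw [heq]
    exact Submodule.mem_sup_right (Submodule.mem_span_singleton_self _)
  rw [aux_mem_sup_span] at h1
  obtain ⟨ξ, hξ, c, hc⟩ := h1
  have hm2 : m' = ξ + c • (u + m) - u := by rw [hc]; abel
  have e : (1 - c) • u = ξ + c • m - m' := by
    rw [hm2, sub_smul, one_smul, smul_add]
    abel
  have hmem : (1 - c) • u ∈ x ⊔ Submodule.span F {v} := by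
    rw [e]
    exact sub_mem (add_mem (Submodule.mem_sup_left hξ)
      (Submodule.mem_sup_right (Submodule.smul_mem _ c hm)))
      (Submodule.mem_sup_right hm')
  have hc1 : c = 1 := (sub_eq_zero.mp (aux_smul_mem _ hu hmem)).symm
  rw [hc1, one_smul] at hm2
  have hmm : m' - m = ξ := by rw [hm2]; abel
  have hfin : m' - m ∈ x ⊓ Submodule.span F {v} :=
    Submodule.mem_inf.2 ⟨by rw [hmm]; exact hξ, sub_mem hm' hm⟩
  rw [aux_inf_span_eq_bot x hv, Submodule.mem_bot, sub_eq_zero] at hfin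
  exact hfin.symm

/-- Surjectivity of the parametrization. -/
private lemma aux_param_surj (h : Submodule F H) {x : Submodule F H} (z : Submodule F H)
    {u v : H}
    (hzh : z ⊓ h = ⊥) (hvh : v ∈ h) (hv0 : v ≠ 0)
    (hxz : x < z) (hfz : finrank F ↥z = finrank F ↥x + 1)
    (hzW : z ≤ (x ⊔ Submodule.span F {v}) ⊔ Submodule.span F {u}) :
    ∃ t : F, z = x ⊔ Submodule.span F {u + t • v} := by
  obtain ⟨w, hwz, hwx⟩ := SetLike.exists_of_lt hxz
  have hzspan : z = x ⊔ Submodule.span F {w} := by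
    refine (Submodule.eq_of_le_of_finrank_le ?_ ?_).symm
    · exact sup_le hxz.le ((Submodule.span_le).2 (Set.singleton_subset_iff.2 hwz))
    · rw [aux_frk_sup_span x hwx, hfz]
  have hwW : w ∈ (x ⊔ Submodule.span F {v}) ⊔ Submodule.span F {u} := hzW hwz
  rw [aux_mem_sup_span] at hwW
  obtain ⟨ζ, hζ, a, hwa⟩ := hwW
  rw [aux_mem_sup_span] at hζ
  obtain ⟨χ, hχ, b, hζb⟩ := hζ
  have ha : a ≠ 0 := by
    intro ha0
    rw [ha0, zero_smul, add_zero] at hwa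
    have hwv : χ + b • v = w := by rw [← hwa]; exact hζb
    have hb : b ≠ 0 := by
      intro hb0
      rw [hb0, zero_smul, add_zero] at hwv
      exact hwx (by rw [← hwv]; exact hχ)
    have hvz : v ∈ z := by
      have hv : v = b⁻¹ • (w - χ) := by
        rw [← hwv, add_sub_cancel_left, smul_smul, inv_mul_cancel₀ hb, one_smul]
      rw [hv]
      exact z.smul_mem _ (sub_mem hwz (hxz.le hχ))
    have hvb : v ∈ z ⊓ h := Submodule.mem_inf.2 ⟨hvz, hvh⟩
    rw [hzh, Submodule.mem_bot] at hvb
    exact hv0 hvb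
  refine ⟨a⁻¹ * b, ?_⟩
  have hspan : Submodule.span F {a⁻¹ • w} = Submodule.span F {w} :=
    Submodule.span_singleton_smul_eq (IsUnit.mk0 _ (inv_ne_zero ha)) w
  have hform : a⁻¹ • w = a⁻¹ • χ + (u + (a⁻¹ * b) • v) := by
    rw [← hwa, ← hζb, smul_add, smul_add, smul_smul, smul_smul, inv_mul_cancel₀ ha, one_smul]
    abel
  rw [hzspan, ← hspan, hform, aux_sup_span_shift x _ (x.smul_mem a⁻¹ hχ)]

/-- Covering in the poset is the same as rank increasing by one. -/
private lemma aux_cov (h : Submodule F H) (x y : AttP F H h) :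
    (x.1 < y.1 ∧ ¬∃ z : AttP F H h, x.1 < z.1 ∧ z.1 < y.1) ↔
      (x.1 < y.1 ∧ finrank F ↥y.1 = finrank F ↥x.1 + 1) := by
  constructor
  · rintro ⟨hlt, hno⟩
    refine ⟨hlt, ?_⟩
    by_contra hne
    have h1 : finrank F ↥x.1 < finrank F ↥y.1 := Submodule.finrank_lt_finrank_of_lt hlt
    obtain ⟨w, hwy, hwx⟩ := SetLike.exists_of_lt hlt
    have hfr : finrank F ↥(x.1 ⊔ Submodule.span F {w}) = finrank F ↥x.1 + 1 :=
      aux_frk_sup_span x.1 hwx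
    have hle : x.1 ⊔ Submodule.span F {w} ≤ y.1 :=
      sup_le hlt.le ((Submodule.span_le).2 (Set.singleton_subset_iff.2 hwy))
    have hzh : (x.1 ⊔ Submodule.span F {w}) ⊓ h = ⊥ := by
      rw [eq_bot_iff]
      exact (inf_le_inf_right h hle).trans (le_of_eq y.2)
    have hxlt : x.1 < x.1 ⊔ Submodule.span F {w} := by
      refine lt_of_le_of_ne le_sup_left (fun e => hwx ?_)
      have hwz : w ∈ x.1 ⊔ Submodule.span F {w} :=
        Submodule.mem_sup_right (Submodule.mem_span_singleton_self w)
      rw [← e] at hwz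
      exact hwz
    have hylt : x.1 ⊔ Submodule.span F {w} < y.1 := by
      refine lt_of_le_of_ne hle (fun e => ?_)
      rw [e] at hfr
      omega
    exact hno ⟨⟨_, hzh⟩, hxlt, hylt⟩
  · rintro ⟨hlt, hrk⟩
    refine ⟨hlt, ?_⟩
    rintro ⟨z, h1, h2⟩
    have g1 := Submodule.finrank_lt_finrank_of_lt h1
    have g2 := Submodule.finrank_lt_finrank_of_lt h2
    omega

private lemma aux_countA (h : Submodule F H) (x y : AttP F H h)
    (hxy : x.1 ≤ y.1) (hy : finrank F ↥y.1 = finrank F ↥x.1 + 1) :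
    Nat.card {v : ↥h // v ≠ 0} = Nat.card {z : AttP F H h //
      x.1 < z.1 ∧ finrank F ↥z.1 = finrank F ↥x.1 + 1 ∧
      finrank F ↥(z.1 ⊔ y.1) = finrank F ↥x.1 + 2 ∧
      finrank F ↥((z.1 ⊔ y.1) ⊓ h) = 1} := by
  have hlt : x.1 < y.1 := lt_of_le_of_ne hxy (fun e => by rw [e] at hy; omega)
  obtain ⟨u₀, hu₀y, hu₀x⟩ := SetLike.exists_of_lt hlt
  have hvy : ∀ (v : H), v ∈ h → v ≠ 0 → v ∉ y.1 := by
    intro v hvh hv0 hvmem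
    have hb : v ∈ y.1 ⊓ h := Submodule.mem_inf.2 ⟨hvmem, hvh⟩
    rw [y.2, Submodule.mem_bot] at hb
    exact hv0 hb
  have hwx : ∀ (v : H), v ∈ h → v ≠ 0 → u₀ + v ∉ x.1 := by
    intro v hvh hv0 hmem
    exact hvy v hvh hv0 (by simpa using sub_mem (hxy hmem) hu₀y)
  have hu₀xv : ∀ (v : H), v ∈ h → v ≠ 0 → u₀ ∉ x.1 ⊔ Submodule.span F {v} := by
    intro v hvh hv0 hmem
    rw [aux_mem_sup_span] at hmem
    obtain ⟨ξ, hξ, c, hc⟩ := hmem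
    have hcv : c • v ∈ y.1 := by
      have e : c • v = u₀ - ξ := by rw [← hc]; abel
      rw [e]
      exact sub_mem hu₀y (hxy hξ)
    have hc0 : c = 0 := aux_smul_mem y.1 (hvy v hvh hv0) hcv
    rw [hc0, zero_smul, add_zero] at hc
    exact hu₀x (by rw [← hc]; exact hξ)
  have hsup : ∀ (v : H), v ∈ h → v ≠ 0 →
      (x.1 ⊔ Submodule.span F {u₀ + v}) ⊔ y.1 = y.1 ⊔ Submodule.span F {v} := by
    intro v hvh hv0
    rw [sup_right_comm, sup_eq_right.2 hxy]
    exact aux_sup_span_shift y.1 v hu₀y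
  have hprop : ∀ (v : H), v ∈ h → v ≠ 0 →
      ((x.1 ⊔ Submodule.span F {u₀ + v}) ⊓ h = ⊥) ∧
      (x.1 < x.1 ⊔ Submodule.span F {u₀ + v} ∧
        finrank F ↥(x.1 ⊔ Submodule.span F {u₀ + v}) = finrank F ↥x.1 + 1 ∧
        finrank F ↥((x.1 ⊔ Submodule.span F {u₀ + v}) ⊔ y.1) = finrank F ↥x.1 + 2 ∧
        finrank F ↥(((x.1 ⊔ Submodule.span F {u₀ + v}) ⊔ y.1) ⊓ h) = 1) := by
    intro v hvh hv0
    have hinf : (y.1 ⊔ Submodule.span F {v}) ⊓ h = Submodule.span F {v} :=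
      aux_sup_singleton_inf h y.1 y.2 hvh
    refine ⟨?_, ?_, aux_frk_sup_span x.1 (hwx v hvh hv0), ?_, ?_⟩
    · exact aux_z_inf_h h x.2 (hxy.trans le_sup_left) hinf.le (hu₀xv v hvh hv0)
        (Submodule.mem_sup_left hu₀y)
        (Submodule.mem_sup_right (Submodule.mem_span_singleton_self v))
        (Submodule.mem_span_singleton_self v)
    · refine lt_of_le_of_ne le_sup_left (fun e => (hwx v hvh hv0) ?_)
      have hwz : u₀ + v ∈ x.1 ⊔ Submodule.span F {u₀ + v} :=
        Submodule.mem_sup_right (Submodule.mem_span_singleton_self _)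
      rw [← e] at hwz
      exact hwz
    · rw [hsup v hvh hv0, aux_frk_sup_span y.1 (hvy v hvh hv0), hy]
    · rw [hsup v hvh hv0, hinf, finrank_span_singleton hv0]
  have hne : ∀ v : {v : ↥h // v ≠ 0}, ((v.1 : H)) ≠ 0 := by
    intro v e
    exact v.2 (Subtype.ext (by simpa using e))
  refine Nat.card_eq_of_bijective (fun v =>
    ⟨⟨x.1 ⊔ Submodule.span F {u₀ + (v.1 : H)}, (hprop v.1 v.1.2 (hne v)).1⟩,
      (hprop v.1 v.1.2 (hne v)).2⟩) ⟨?_, ?_⟩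
  · intro v v' he
    have hzz : x.1 ⊔ Submodule.span F {u₀ + (v.1 : H)}
        = x.1 ⊔ Submodule.span F {u₀ + (v'.1 : H)} := congrArg (fun t => t.1.1) he
    have h1 : u₀ + (v'.1 : H) ∈ x.1 ⊔ Submodule.span F {u₀ + (v.1 : H)} := by
      rw [hzz]
      exact Submodule.mem_sup_right (Submodule.mem_span_singleton_self _)
    rw [aux_mem_sup_span] at h1
    obtain ⟨ξ, hξ, c, hc⟩ := h1
    have e : c • (v.1 : H) - (v'.1 : H) = (1 - c) • u₀ - ξ := by
      have e2 : (v'.1 : H) = ξ + c • (u₀ + (v.1 : H)) - u₀ := by rw [hc]; abel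
      rw [e2, sub_smul, one_smul, smul_add]
      abel
    have eh : c • (v.1 : H) - (v'.1 : H) ∈ h := sub_mem (h.smul_mem c v.1.2) v'.1.2
    have ey : c • (v.1 : H) - (v'.1 : H) ∈ y.1 := by
      rw [e]
      exact sub_mem (y.1.smul_mem _ hu₀y) (hxy hξ)
    have e0 : c • (v.1 : H) - (v'.1 : H) = 0 := by
      have hb : c • (v.1 : H) - (v'.1 : H) ∈ y.1 ⊓ h := Submodule.mem_inf.2 ⟨ey, eh⟩
      rwa [y.2, Submodule.mem_bot] at hb
    have e1 : (1 - c) • u₀ = ξ := by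
      have e3 : (1 - c) • u₀ - ξ = 0 := by rw [← e]; exact e0
      rwa [sub_eq_zero] at e3
    have hc1 : (1 : F) - c = 0 := aux_smul_mem x.1 hu₀x (by rw [e1]; exact hξ)
    have hc1' : c = 1 := (sub_eq_zero.mp hc1).symm
    rw [hc1', one_smul, sub_eq_zero] at e0
    exact Subtype.ext (Subtype.ext e0)
  · rintro ⟨z, hz1, hz2, hz3, hz4⟩
    have hne_bot : (z.1 ⊔ y.1) ⊓ h ≠ ⊥ := by
      intro e
      rw [e] at hz4
      simp at hz4
    obtain ⟨v₁, hv₁mem, hv₁0⟩ := (Submodule.ne_bot_iff _).1 hne_bot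
    obtain ⟨hv₁W, hv₁h⟩ := Submodule.mem_inf.1 hv₁mem
    have hv₁y : v₁ ∉ y.1 := hvy v₁ hv₁h hv₁0
    have hWspan : z.1 ⊔ y.1 = y.1 ⊔ Submodule.span F {v₁} := by
      refine (Submodule.eq_of_le_of_finrank_le ?_ ?_).symm
      · exact sup_le le_sup_right ((Submodule.span_le).2 (Set.singleton_subset_iff.2 hv₁W))
      · rw [aux_frk_sup_span y.1 hv₁y, hy, hz3]
    have hyspan : y.1 = x.1 ⊔ Submodule.span F {u₀} := by
      refine (Submodule.eq_of_le_of_finrank_le ?_ ?_).symm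
      · exact sup_le hxy ((Submodule.span_le).2 (Set.singleton_subset_iff.2 hu₀y))
      · rw [aux_frk_sup_span x.1 hu₀x, hy]
    have hzW : z.1 ≤ (x.1 ⊔ Submodule.span F {v₁}) ⊔ Submodule.span F {u₀} := by
      have hle : z.1 ≤ z.1 ⊔ y.1 := le_sup_left
      rw [hWspan, hyspan] at hle
      exact hle.trans (le_of_eq (sup_right_comm _ _ _))
    obtain ⟨t, hzt⟩ := aux_param_surj h z.1 z.2 hv₁h hv₁0 hz1 hz2 hzW
    have ht0 : t ≠ 0 := by
      intro h0
      rw [h0, zero_smul, add_zero, ← hyspan] at hzt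
      rw [hzt, sup_idem, hy] at hz3
      omega
    refine ⟨⟨⟨t • v₁, h.smul_mem t hv₁h⟩,
      fun e => smul_ne_zero ht0 hv₁0 (by simpa using congrArg Subtype.val e)⟩, ?_⟩
    apply Subtype.ext
    apply Subtype.ext
    exact hzt.symm

private lemma aux_countB_A (h : Submodule F H) (x y : AttP F H h)
    (hy : finrank F ↥y.1 = finrank F ↥x.1 + 1)
    (hU2 : finrank F ↥(x.1 ⊔ y.1) = finrank F ↥x.1 + 2)
    (hU1 : finrank F ↥((x.1 ⊔ y.1) ⊓ h) = 1) :
    Nat.card F = Nat.card {z : AttP F H h //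
      x.1 < z.1 ∧ finrank F ↥z.1 = finrank F ↥x.1 + 1 ∧
      finrank F ↥(z.1 ⊔ y.1) = finrank F ↥x.1 + 2 ∧
      finrank F ↥((z.1 ⊔ y.1) ⊓ h) = 1} := by
  have hne_bot : (x.1 ⊔ y.1) ⊓ h ≠ ⊥ := by
    intro e
    rw [e] at hU1
    simp at hU1
  obtain ⟨v₀, hv₀mem, hv₀0⟩ := (Submodule.ne_bot_iff _).1 hne_bot
  obtain ⟨hv₀U, hv₀h⟩ := Submodule.mem_inf.1 hv₀mem
  have hv₀x : v₀ ∉ x.1 := by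
    intro hm
    have hb : v₀ ∈ x.1 ⊓ h := Submodule.mem_inf.2 ⟨hm, hv₀h⟩
    rw [x.2, Submodule.mem_bot] at hb
    exact hv₀0 hb
  have hℓ : Submodule.span F {v₀} = (x.1 ⊔ y.1) ⊓ h := by
    refine Submodule.eq_of_le_of_finrank_le ?_ ?_
    · rw [Submodule.span_le, Set.singleton_subset_iff]
      exact hv₀mem
    · rw [finrank_span_singleton hv₀0, hU1]
  have hxl : finrank F ↥(x.1 ⊔ Submodule.span F {v₀}) = finrank F ↥x.1 + 1 :=
    aux_frk_sup_span x.1 hv₀x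
  have hxlU : x.1 ⊔ Submodule.span F {v₀} ≤ x.1 ⊔ y.1 :=
    sup_le le_sup_left (hℓ.le.trans inf_le_left)
  have hxlUlt : x.1 ⊔ Submodule.span F {v₀} < x.1 ⊔ y.1 := by
    refine lt_of_le_of_ne hxlU (fun e => ?_)
    rw [e, hU2] at hxl
    omega
  obtain ⟨u₀, hu₀U, hu₀l⟩ := SetLike.exists_of_lt hxlUlt
  have hWeq : (x.1 ⊔ Submodule.span F {v₀}) ⊔ Submodule.span F {u₀} = x.1 ⊔ y.1 := by
    refine Submodule.eq_of_le_of_finrank_le ?_ ?_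
    · exact sup_le hxlU ((Submodule.span_le).2 (Set.singleton_subset_iff.2 hu₀U))
    · rw [aux_frk_sup_span _ hu₀l, hxl, hU2]
  have hwt : ∀ t : F, u₀ + t • v₀ ∉ x.1 ⊔ Submodule.span F {v₀} := by
    intro t hmem
    refine hu₀l ?_
    have e : u₀ = (u₀ + t • v₀) - t • v₀ := by abel
    rw [e]
    exact sub_mem hmem (Submodule.mem_sup_right (Submodule.smul_mem _ t
      (Submodule.mem_span_singleton_self v₀)))
  have hwtx : ∀ t : F, u₀ + t • v₀ ∉ x.1 :=
    fun t hmem => hwt t (Submodule.mem_sup_left hmem)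
  have hztU : ∀ t : F, x.1 ⊔ Submodule.span F {u₀ + t • v₀} ≤ x.1 ⊔ y.1 := by
    intro t
    refine sup_le le_sup_left ?_
    rw [Submodule.span_le, Set.singleton_subset_iff]
    exact add_mem hu₀U ((x.1 ⊔ y.1).smul_mem t ((hℓ.le.trans inf_le_left)
      (Submodule.mem_span_singleton_self v₀)))
  have hzty : ∀ t : F, (x.1 ⊔ Submodule.span F {u₀ + t • v₀}) ⊔ y.1 = x.1 ⊔ y.1 := by
    intro t
    refine le_antisymm (sup_le (hztU t) le_sup_right) (sup_le ?_ le_sup_right)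
    exact le_sup_left.trans le_sup_left
  have hprop : ∀ t : F,
      ((x.1 ⊔ Submodule.span F {u₀ + t • v₀}) ⊓ h = ⊥) ∧
      (x.1 < x.1 ⊔ Submodule.span F {u₀ + t • v₀} ∧
        finrank F ↥(x.1 ⊔ Submodule.span F {u₀ + t • v₀}) = finrank F ↥x.1 + 1 ∧
        finrank F ↥((x.1 ⊔ Submodule.span F {u₀ + t • v₀}) ⊔ y.1) = finrank F ↥x.1 + 2 ∧
        finrank F ↥(((x.1 ⊔ Submodule.span F {u₀ + t • v₀}) ⊔ y.1) ⊓ h) = 1) := by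
    intro t
    refine ⟨?_, ?_, aux_frk_sup_span x.1 (hwtx t), ?_, ?_⟩
    · exact aux_z_inf_h h x.2 le_sup_left hℓ.ge
        hu₀l hu₀U ((hℓ.le.trans inf_le_left) (Submodule.mem_span_singleton_self v₀))
        (Submodule.smul_mem _ t (Submodule.mem_span_singleton_self v₀))
    · refine lt_of_le_of_ne le_sup_left (fun e => (hwtx t) ?_)
      have hwz : u₀ + t • v₀ ∈ x.1 ⊔ Submodule.span F {u₀ + t • v₀} :=
        Submodule.mem_sup_right (Submodule.mem_span_singleton_self _)
      rw [← e] at hwz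
      exact hwz
    · rw [hzty t, hU2]
    · rw [hzty t, hU1]
  refine Nat.card_eq_of_bijective (fun t =>
    ⟨⟨x.1 ⊔ Submodule.span F {u₀ + t • v₀}, (hprop t).1⟩, (hprop t).2⟩) ⟨?_, ?_⟩
  · intro t s he
    have hzz : x.1 ⊔ Submodule.span F {u₀ + t • v₀}
        = x.1 ⊔ Submodule.span F {u₀ + s • v₀} := congrArg (fun w => w.1.1) he
    have hts : t • v₀ = s • v₀ := aux_param_inj hu₀l hv₀x
      (Submodule.smul_mem _ t (Submodule.mem_span_singleton_self v₀))
      (Submodule.smul_mem _ s (Submodule.mem_span_singleton_self v₀)) hzz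
    have : (t - s) • v₀ = 0 := by rw [sub_smul, hts]; abel
    rcases smul_eq_zero.1 this with h0 | h0
    · exact sub_eq_zero.mp h0
    · exact absurd h0 hv₀0
  · rintro ⟨z, hz1, hz2, hz3, hz4⟩
    have hzU : z.1 ⊔ y.1 = x.1 ⊔ y.1 := by
      refine (Submodule.eq_of_le_of_finrank_le ?_ ?_).symm
      · exact sup_le_sup_right hz1.le y.1
      · rw [hz3, hU2]
    have hzW : z.1 ≤ (x.1 ⊔ Submodule.span F {v₀}) ⊔ Submodule.span F {u₀} := by
      rw [hWeq, ← hzU]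
      exact le_sup_left
    obtain ⟨t, hzt⟩ := aux_param_surj h z.1 z.2 hv₀h hv₀0 hz1 hz2 hzW
    refine ⟨t, ?_⟩
    apply Subtype.ext
    apply Subtype.ext
    exact hzt.symm

private lemma aux_countB_B (h : Submodule F H) (x y : AttP F H h)
    (hxy : ¬ x.1 ≤ y.1)
    (hy : finrank F ↥y.1 = finrank F ↥x.1 + 1)
    (hU2 : finrank F ↥(x.1 ⊔ y.1) = finrank F ↥x.1 + 2)
    (hU1 : finrank F ↥((x.1 ⊔ y.1) ⊓ h) = 1) :
    Nat.card {z : AttP F H h //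
      finrank F ↥z.1 = finrank F ↥x.1 ∧
      finrank F ↥(x.1 ⊔ z.1) = finrank F ↥x.1 + 1 ∧
      finrank F ↥((x.1 ⊔ z.1) ⊓ h) = 1 ∧ z.1 < y.1} = 1 := by
  have hne_bot : (x.1 ⊔ y.1) ⊓ h ≠ ⊥ := by
    intro e
    rw [e] at hU1
    simp at hU1
  obtain ⟨v₀, hv₀mem, hv₀0⟩ := (Submodule.ne_bot_iff _).1 hne_bot
  obtain ⟨hv₀U, hv₀h⟩ := Submodule.mem_inf.1 hv₀mem
  have hv₀x : v₀ ∉ x.1 := by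
    intro hm
    have hb : v₀ ∈ x.1 ⊓ h := Submodule.mem_inf.2 ⟨hm, hv₀h⟩
    rw [x.2, Submodule.mem_bot] at hb
    exact hv₀0 hb
  have hℓ : Submodule.span F {v₀} = (x.1 ⊔ y.1) ⊓ h := by
    refine Submodule.eq_of_le_of_finrank_le ?_ ?_
    · rw [Submodule.span_le, Set.singleton_subset_iff]
      exact hv₀mem
    · rw [finrank_span_singleton hv₀0, hU1]
  have hxl : finrank F ↥(x.1 ⊔ Submodule.span F {v₀}) = finrank F ↥x.1 + 1 :=
    aux_frk_sup_span x.1 hv₀x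
  have hxlU : x.1 ⊔ Submodule.span F {v₀} ≤ x.1 ⊔ y.1 :=
    sup_le le_sup_left (hℓ.le.trans inf_le_left)
  have hlh : (x.1 ⊔ Submodule.span F {v₀}) ⊓ h = Submodule.span F {v₀} := by
    refine le_antisymm ?_ (le_inf le_sup_right ((Submodule.span_le).2
      (Set.singleton_subset_iff.2 hv₀h)))
    exact (inf_le_inf_right h hxlU).trans hℓ.ge
  -- rank of x ⊓ y
  have hixy := Submodule.finrank_sup_add_finrank_inf_eq x.1 y.1
  have hixylt : x.1 ⊓ y.1 < x.1 := by
    refine lt_of_le_of_ne inf_le_left (fun e => hxy ?_)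
    rw [← e]
    exact inf_le_right
  have hixyr := Submodule.finrank_lt_finrank_of_lt hixylt
  -- the canonical z₀
  set z₀ : Submodule F H := (x.1 ⊔ Submodule.span F {v₀}) ⊓ y.1 with hz₀def
  have hz₀h : z₀ ⊓ h = ⊥ := by
    rw [eq_bot_iff]
    exact (inf_le_inf_right h inf_le_right).trans (le_of_eq y.2)
  have hsupU : (x.1 ⊔ Submodule.span F {v₀}) ⊔ y.1 = x.1 ⊔ y.1 := by
    refine le_antisymm (sup_le hxlU le_sup_right) (sup_le_sup_right le_sup_left y.1)
  have hfz₀ : finrank F ↥z₀ = finrank F ↥x.1 := by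
    have e := Submodule.finrank_sup_add_finrank_inf_eq (x.1 ⊔ Submodule.span F {v₀}) y.1
    rw [hsupU, hU2, hxl, hy, ← hz₀def] at e
    omega
  have hz₀y : z₀ ≤ y.1 := inf_le_right
  have hz₀lt : z₀ < y.1 := by
    refine lt_of_le_of_ne hz₀y (fun e => ?_)
    rw [e, hy] at hfz₀
    omega
  have hxz₀ : x.1 ⊔ z₀ = x.1 ⊔ Submodule.span F {v₀} := by
    refine Submodule.eq_of_le_of_finrank_le (sup_le le_sup_left inf_le_left) ?_
    have e := Submodule.finrank_sup_add_finrank_inf_eq x.1 z₀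
    have hle : x.1 ⊓ z₀ ≤ x.1 ⊓ y.1 := inf_le_inf_left x.1 hz₀y
    have hle2 : finrank F ↥(x.1 ⊓ z₀) ≤ finrank F ↥(x.1 ⊓ y.1) := Submodule.finrank_mono hle
    rw [hxl]
    omega
  have huniq : ∀ z : AttP F H h,
      (finrank F ↥z.1 = finrank F ↥x.1 ∧
        finrank F ↥(x.1 ⊔ z.1) = finrank F ↥x.1 + 1 ∧
        finrank F ↥((x.1 ⊔ z.1) ⊓ h) = 1 ∧ z.1 < y.1) → z.1 = z₀ := by
    rintro z ⟨hr1, hr2, hr3, hr4⟩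
    have hxzU : x.1 ⊔ z.1 ≤ x.1 ⊔ y.1 := sup_le le_sup_left (hr4.le.trans le_sup_right)
    have hinfl : (x.1 ⊔ z.1) ⊓ h = Submodule.span F {v₀} := by
      refine Submodule.eq_of_le_of_finrank_le ?_ ?_
      · exact (inf_le_inf_right h hxzU).trans hℓ.ge
      · rw [finrank_span_singleton hv₀0, hr3]
    have hxzl : x.1 ⊔ Submodule.span F {v₀} = x.1 ⊔ z.1 := by
      refine Submodule.eq_of_le_of_finrank_le ?_ ?_
      · refine sup_le le_sup_left ?_
        rw [← hinfl]
        exact inf_le_left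
      · rw [hxl, hr2]
    have hzz₀ : z.1 ≤ z₀ := le_inf (by rw [hxzl]; exact le_sup_right) hr4.le
    refine (Submodule.eq_of_le_of_finrank_le hzz₀ ?_)
    rw [hfz₀, hr1]
  rw [Nat.card_eq_one_iff_unique]
  constructor
  · constructor
    intro a b
    apply Subtype.ext
    apply Subtype.ext
    rw [huniq a.1 a.2, huniq b.1 b.2]
  · have hconds : finrank F ↥z₀ = finrank F ↥x.1 ∧
        finrank F ↥(x.1 ⊔ z₀) = finrank F ↥x.1 + 1 ∧
        finrank F ↥((x.1 ⊔ z₀) ⊓ h) = 1 ∧ z₀ < y.1 := by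
      refine ⟨hfz₀, ?_, ?_, hz₀lt⟩
      · rw [hxz₀, hxl]
      · rw [hxz₀, hlh, finrank_span_singleton hv₀0]
    exact ⟨⟨⟨z₀, hz₀h⟩, hconds⟩⟩

private lemma aux_degen_A (h : Submodule F H) (x y z : AttP F H h)
    (hxy : ¬ x.1 ≤ y.1) (hy : finrank F ↥y.1 = finrank F ↥x.1 + 1)
    (h1 : x.1 < z.1) (h2 : finrank F ↥z.1 = finrank F ↥x.1 + 1)
    (h3 : finrank F ↥(z.1 ⊔ y.1) = finrank F ↥z.1 + 1)
    (h4 : finrank F ↥((z.1 ⊔ y.1) ⊓ h) = 1) :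
    finrank F ↥(x.1 ⊔ y.1) = finrank F ↥x.1 + 2 ∧
      finrank F ↥((x.1 ⊔ y.1) ⊓ h) = 1 := by
  have hixylt : x.1 ⊓ y.1 < x.1 :=
    lt_of_le_of_ne inf_le_left (fun e => hxy (by rw [← e]; exact inf_le_right))
  have hr := Submodule.finrank_lt_finrank_of_lt hixylt
  have hsum := Submodule.finrank_sup_add_finrank_inf_eq x.1 y.1
  have hUle : x.1 ⊔ y.1 ≤ z.1 ⊔ y.1 := sup_le_sup_right h1.le y.1
  have heq : x.1 ⊔ y.1 = z.1 ⊔ y.1 := Submodule.eq_of_le_of_finrank_le hUle (by omega)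
  constructor
  · rw [heq]
    omega
  · rw [heq]
    exact h4

private lemma aux_degen_B (h : Submodule F H) (x y z : AttP F H h)
    (hxy : ¬ x.1 ≤ y.1) (hy : finrank F ↥y.1 = finrank F ↥x.1 + 1)
    (h1 : finrank F ↥x.1 = finrank F ↥z.1)
    (h2 : finrank F ↥(x.1 ⊔ z.1) = finrank F ↥x.1 + 1)
    (h3 : finrank F ↥((x.1 ⊔ z.1) ⊓ h) = 1)
    (h4 : z.1 < y.1) :
    finrank F ↥(x.1 ⊔ y.1) = finrank F ↥x.1 + 2 ∧
      finrank F ↥((x.1 ⊔ y.1) ⊓ h) = 1 := by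
  have hixylt : x.1 ⊓ y.1 < x.1 :=
    lt_of_le_of_ne inf_le_left (fun e => hxy (by rw [← e]; exact inf_le_right))
  have hr := Submodule.finrank_lt_finrank_of_lt hixylt
  have hsum := Submodule.finrank_sup_add_finrank_inf_eq x.1 y.1
  have hsum2 := Submodule.finrank_sup_add_finrank_inf_eq x.1 z.1
  have hmono : finrank F ↥(x.1 ⊓ z.1) ≤ finrank F ↥(x.1 ⊓ y.1) :=
    Submodule.finrank_mono (inf_le_inf_left x.1 h4.le)
  have hU2 : finrank F ↥(x.1 ⊔ y.1) = finrank F ↥x.1 + 2 := by omega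
  refine ⟨hU2, ?_⟩
  have hlow : 1 ≤ finrank F ↥((x.1 ⊔ y.1) ⊓ h) := by
    have hle : (x.1 ⊔ z.1) ⊓ h ≤ (x.1 ⊔ y.1) ⊓ h :=
      inf_le_inf_right h (sup_le le_sup_left (h4.le.trans le_sup_right))
    have := Submodule.finrank_mono hle
    omega
  have hup : finrank F ↥((x.1 ⊔ y.1) ⊓ h) + finrank F ↥y.1 ≤ finrank F ↥(x.1 ⊔ y.1) := by
    have e := Submodule.finrank_sup_add_finrank_inf_eq ((x.1 ⊔ y.1) ⊓ h) y.1
    have hbot : ((x.1 ⊔ y.1) ⊓ h) ⊓ y.1 = ⊥ := by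
      rw [eq_bot_iff]
      intro a ha
      rw [Submodule.mem_inf, Submodule.mem_inf] at ha
      have hb : a ∈ y.1 ⊓ h := Submodule.mem_inf.2 ⟨ha.2, ha.1.2⟩
      rw [y.2] at hb
      exact hb
    have hm := Submodule.finrank_mono (sup_le inf_le_left le_sup_right :
      ((x.1 ⊔ y.1) ⊓ h) ⊔ y.1 ≤ x.1 ⊔ y.1)
    rw [hbot, finrank_bot] at e
    omega
  omega

private lemma aux_prod_ite {A B C : Prop} {dA : Decidable A} {dB : Decidable B}
    {dC : Decidable C} (hiff : A ∧ B ↔ C) :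
    ((@ite ℂ A dA 1 0) * (@ite ℂ B dB 1 0)) = @ite ℂ C dC 1 0 := by
  by_cases hC : C
  · rw [if_pos hC]
    obtain ⟨hA, hB⟩ := hiff.2 hC
    rw [if_pos hA, if_pos hB, one_mul]
  · rw [if_neg hC]
    by_cases hA : A
    · have hB : ¬B := fun hB => hC (hiff.1 ⟨hA, hB⟩)
      rw [if_pos hA, if_neg hB, mul_zero]
    · rw [if_neg hA, zero_mul]

end Aux


theorem stmt_17 (q N M : ℕ) (hq : 2 ≤ q) (hN : 0 < N) (hM : 0 < M)
    (F : Type) [Field F] [Fintype F] (hF : Fintype.card F = q)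
    (H : Type) [AddCommGroup H] [Module F H] [Finite H]
    (hH : Module.finrank F H = N + M)
    (h : Submodule F H) (hh : Module.finrank F ↥h = M)
    (L R S : Matrix (AttP F H h) (AttP F H h) ℂ)
    (hL : ∀ x y : AttP F H h, L x y =
      if x.1 < y.1 ∧ ¬∃ z : AttP F H h, x.1 < z.1 ∧ z.1 < y.1 then 1 else 0)
    (hR : ∀ x y : AttP F H h, R x y =
      if y.1 < x.1 ∧ ¬∃ z : AttP F H h, y.1 < z.1 ∧ z.1 < x.1 then 1 else 0)
    (hS : ∀ x y : AttP F H h, S x y =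
      if Module.finrank F ↥x.1 = Module.finrank F ↥y.1
        ∧ Module.finrank F ↥(x.1 ⊔ y.1) = Module.finrank F ↥x.1 + 1
        ∧ Module.finrank F ↥((x.1 ⊔ y.1) ⊓ h) = 1 then 1 else 0) :
    L * S - (q : ℂ) • (S * L) = ((q : ℂ) ^ M - 1) • L
    ∧ S * R - (q : ℂ) • (R * S) = ((q : ℂ) ^ M - 1) • R := by
  classical
  haveI : FiniteDimensional F H := Module.Finite.of_finite
  have hcards : ∀ (P : AttP F H h → Prop),
      (∑ z : AttP F H h, (if P z then (1 : ℂ) else 0)) = (Nat.card {z : AttP F H h // P z} : ℂ) := by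
    intro P
    rw [Finset.sum_boole, Nat.card_eq_fintype_card, Fintype.card_subtype]
  have hL' : ∀ x y : AttP F H h, L x y =
      if x.1 < y.1 ∧ Module.finrank F ↥y.1 = Module.finrank F ↥x.1 + 1 then 1 else 0 := by
    intro x y
    rw [hL x y]
    exact if_congr (aux_cov h x y) rfl rfl
  have hhcard : Nat.card {v : ↥h // v ≠ 0} = q ^ M - 1 := by
    letI : Fintype ↥h := Fintype.ofFinite _
    have hch : Fintype.card ↥h = q ^ M := by
      rw [← hF, ← hh]
      exact card_eq_pow_finrank
    rw [Nat.card_eq_fintype_card]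
    have e2 : Fintype.card {v : ↥h // ¬ (v = 0)} =
        Fintype.card ↥h - Fintype.card {v : ↥h // v = 0} :=
      Fintype.card_subtype_compl _
    have e3 : Fintype.card {v : ↥h // v = 0} = 1 := Fintype.card_subtype_eq (0 : ↥h)
    calc Fintype.card {v : ↥h // v ≠ 0}
        = Fintype.card ↥h - Fintype.card {v : ↥h // v = 0} := e2
      _ = q ^ M - 1 := by rw [e3, hch]
  have main : L * S - (q : ℂ) • (S * L) = ((q : ℂ) ^ M - 1) • L := by
    ext x y
    simp only [Matrix.sub_apply, Matrix.smul_apply, Matrix.mul_apply, smul_eq_mul]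
    by_cases hy : Module.finrank F ↥y.1 = Module.finrank F ↥x.1 + 1
    · have hLS : (∑ z : AttP F H h, L x z * S z y) =
          (Nat.card {z : AttP F H h //
            x.1 < z.1 ∧ Module.finrank F ↥z.1 = Module.finrank F ↥x.1 + 1 ∧
            Module.finrank F ↥(z.1 ⊔ y.1) = Module.finrank F ↥x.1 + 2 ∧
            Module.finrank F ↥((z.1 ⊔ y.1) ⊓ h) = 1} : ℂ) := by
        rw [← hcards]
        refine Finset.sum_congr rfl (fun z _ => ?_)
        rw [hL' x z, hS z y]
        apply aux_prod_ite
        constructor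
        · rintro ⟨⟨p1, p2⟩, q1, q2, q3⟩
          exact ⟨p1, p2, by omega, q3⟩
        · rintro ⟨p1, p2, p3, p4⟩
          exact ⟨⟨p1, p2⟩, by omega, by omega, p4⟩
      by_cases hxy : x.1 ≤ y.1
      · -- case (a)
        have hlt : x.1 < y.1 := lt_of_le_of_ne hxy (fun e => by rw [e] at hy; omega)
        have hSL : (∑ z : AttP F H h, S x z * L z y) = 0 := by
          refine Finset.sum_eq_zero (fun z _ => ?_)
          rw [hS x z, hL' z y]
          split_ifs with h1 h2
          · exfalso
            obtain ⟨ha1, ha2, ha3⟩ := h1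
            obtain ⟨hb1, hb2⟩ := h2
            have hsup : x.1 ⊔ z.1 ≤ y.1 := sup_le hxy hb1.le
            have heq : x.1 ⊔ z.1 = y.1 :=
              Submodule.eq_of_le_of_finrank_le hsup (by omega)
            rw [heq, y.2] at ha3
            simp at ha3
          all_goals ring
        have hval : Nat.card {z : AttP F H h //
            x.1 < z.1 ∧ Module.finrank F ↥z.1 = Module.finrank F ↥x.1 + 1 ∧
            Module.finrank F ↥(z.1 ⊔ y.1) = Module.finrank F ↥x.1 + 2 ∧
            Module.finrank F ↥((z.1 ⊔ y.1) ⊓ h) = 1} = q ^ M - 1 := by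
          rw [← aux_countA h x y hxy hy]
          exact hhcard
        rw [hLS, hSL, hval, hL' x y, if_pos ⟨hlt, hy⟩]
        have h1M : 1 ≤ q ^ M := Nat.one_le_pow _ _ (by omega)
        rw [Nat.cast_sub h1M]
        push_cast
        ring
      · -- case (b)
        have hSL : (∑ z : AttP F H h, S x z * L z y) =
            (Nat.card {z : AttP F H h //
              Module.finrank F ↥z.1 = Module.finrank F ↥x.1 ∧
              Module.finrank F ↥(x.1 ⊔ z.1) = Module.finrank F ↥x.1 + 1 ∧
              Module.finrank F ↥((x.1 ⊔ z.1) ⊓ h) = 1 ∧ z.1 < y.1} : ℂ) := by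
          rw [← hcards]
          refine Finset.sum_congr rfl (fun z _ => ?_)
          rw [hS x z, hL' z y]
          apply aux_prod_ite
          constructor
          · rintro ⟨⟨p1, p2, p3⟩, q1, q2⟩
            exact ⟨p1.symm, p2, p3, q1⟩
          · rintro ⟨p1, p2, p3, p4⟩
            exact ⟨⟨p1.symm, p2, p3⟩, p4, by omega⟩
        have hLxy : L x y = 0 := by
          rw [hL' x y, if_neg]
          rintro ⟨hc, -⟩
          exact hxy hc.le
        by_cases hU : Module.finrank F ↥(x.1 ⊔ y.1) = Module.finrank F ↥x.1 + 2 ∧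
            Module.finrank F ↥((x.1 ⊔ y.1) ⊓ h) = 1
        · have hvalA : Nat.card {z : AttP F H h //
              x.1 < z.1 ∧ Module.finrank F ↥z.1 = Module.finrank F ↥x.1 + 1 ∧
              Module.finrank F ↥(z.1 ⊔ y.1) = Module.finrank F ↥x.1 + 2 ∧
              Module.finrank F ↥((z.1 ⊔ y.1) ⊓ h) = 1} = q := by
            rw [← aux_countB_A h x y hy hU.1 hU.2, Nat.card_eq_fintype_card, hF]
          have hvalB : Nat.card {z : AttP F H h //
              Module.finrank F ↥z.1 = Module.finrank F ↥x.1 ∧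
              Module.finrank F ↥(x.1 ⊔ z.1) = Module.finrank F ↥x.1 + 1 ∧
              Module.finrank F ↥((x.1 ⊔ z.1) ⊓ h) = 1 ∧ z.1 < y.1} = 1 :=
            aux_countB_B h x y hxy hy hU.1 hU.2
          rw [hLS, hSL, hvalA, hvalB, hLxy]
          push_cast
          ring
        · have hLS0 : (∑ z : AttP F H h, L x z * S z y) = 0 := by
            refine Finset.sum_eq_zero (fun z _ => ?_)
            rw [hL' x z, hS z y]
            split_ifs with h1 h2
            · exact absurd (aux_degen_A h x y z hxy hy h1.1 h1.2 h2.2.1 h2.2.2) hU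
            all_goals ring
          have hSL0 : (∑ z : AttP F H h, S x z * L z y) = 0 := by
            refine Finset.sum_eq_zero (fun z _ => ?_)
            rw [hS x z, hL' z y]
            split_ifs with h1 h2
            · exact absurd (aux_degen_B h x y z hxy hy h1.1 h1.2.1 h1.2.2 h2.1) hU
            all_goals ring
          rw [hLS0, hSL0, hLxy]
          ring
    · -- ranks do not match : everything vanishes
      have hLS0 : (∑ z : AttP F H h, L x z * S z y) = 0 := by
        refine Finset.sum_eq_zero (fun z _ => ?_)
        rw [hL' x z, hS z y]
        split_ifs with h1 h2
        · exact absurd (h2.1.symm.trans h1.2) hy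
        all_goals ring
      have hSL0 : (∑ z : AttP F H h, S x z * L z y) = 0 := by
        refine Finset.sum_eq_zero (fun z _ => ?_)
        rw [hS x z, hL' z y]
        split_ifs with h1 h2
        · exfalso
          have e1 := h1.1
          have e2 := h2.2
          omega
        all_goals ring
      have hLxy : L x y = 0 := by
        rw [hL' x y, if_neg]
        rintro ⟨-, hc⟩
        exact hy hc
      rw [hLS0, hSL0, hLxy]
      ring
  refine ⟨main, ?_⟩
  have hSymm : S.transpose = S := by
    ext x y
    rw [Matrix.transpose_apply, hS y x, hS x y]
    refine if_congr ?_ rfl rfl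
    constructor <;> rintro ⟨p1, p2, p3⟩ <;> rw [sup_comm] at p2 p3 <;>
      exact ⟨p1.symm, by omega, p3⟩
  have hRt : R = L.transpose := by
    ext x y
    rw [Matrix.transpose_apply, hR x y, hL y x]
  have htr := congrArg Matrix.transpose main
  rw [Matrix.transpose_sub, Matrix.transpose_smul, Matrix.transpose_smul,
    Matrix.transpose_mul, Matrix.transpose_mul, hSymm, ← hRt] at htr
  exact htr
end

section
/- Let d ≥ 3 and let A, A* be a pair of linear operators on a (d+1)-dimensional complex vector space such that, in some basis, A is irreducible lower bidiagonal with diagonal entries θ₀,…,θ_d and A* is irreducible upper bidiagonal with diagonal entries θ*₀,…,θ*_d, all θ_i distinct and all θ*_i distinct. Let β, γ, γ*, ϱ, ϱ* ∈ ℂ. If for 2 ≤ i ≤ d−1: β + 1 = (θ_{i−2} − θ_{i+1})/(θ_{i−1} − θ_i) = (θ*_{i−2} − θ*_{i+1})/(θ*_{i−1} − θ*_i); for 1 ≤ i ≤ d−1: γ = θ_{i−1} − βθ_i + θ_{i+1} and γ* = θ*_{i−1} − βθ*_i + θ*_{i+1}; and for 1 ≤ i ≤ d: ϱ = θ²_{i−1}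 − βθ_{i−1}θ_i + θ²_i − γ(θ_{i−1} + θ_i) and ϱ* = θ*²_{i−1} − βθ*_{i−1}θ*_i + θ*²_i − γ*(θ*_{i−1} + θ*_i), then whenever A, A* form a Leonard pair with eigenvalue sequence {θ_i} and dual eigenvalue sequence {θ*_i}, they satisfy the tridiagonal relations [A, A²A* − βAA*A + A*A² − γ(AA* + A*A) − ϱA*] = 0 and [A*, A*²A − βA*AA* + AA*² − γ*(A*A + AA*) − ϱ*A] = 0. -/
/-- A matrix is irreducible tridiagonal: zero off the three central diagonals,
with all superdiagonal and subdiagonal entries nonzero. -/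
def IsIrredTridiagonal {n : ℕ} (M : Matrix (Fin n) (Fin n) ℂ) : Prop :=
  (∀ i j : Fin n, ((i : ℕ) + 1 < (j : ℕ) ∨ (j : ℕ) + 1 < (i : ℕ)) → M i j = 0)
  ∧ (∀ i j : Fin n, ((i : ℕ) = (j : ℕ) + 1 ∨ (j : ℕ) = (i : ℕ) + 1) → M i j ≠ 0)


/-- Conjugation by an invertible matrix as a ring equivalence. -/
noncomputable def conjEquiv {n : ℕ} (T S : Matrix (Fin n) (Fin n) ℂ) (h1 : S * T = 1) (h2 : T * S = 1) :
    Matrix (Fin n) (Fin n) ℂ ≃+* Matrix (Fin n) (Fin n) ℂ where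
  toFun M := T * M * S
  invFun M := S * M * T
  left_inv M := by
    show S * (T * M * S) * T = M
    have e : S * (T * M * S) * T = (S * T) * M * (S * T) := by noncomm_ring
    rw [e, h1, Matrix.one_mul, Matrix.mul_one]
  right_inv M := by
    show T * (S * M * T) * S = M
    have e : T * (S * M * T) * S = (T * S) * M * (T * S) := by noncomm_ring
    rw [e, h2, Matrix.one_mul, Matrix.mul_one]
  map_add' M N := by noncomm_ring
  map_mul' M N := by
    show T * (M * N) * S = (T * M * S) * (T * N * S)
    have e : (T * M * S) * (T * N * S) = T * (M * (S * T) * N) * S := by noncomm_ring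
    rw [e, h1, Matrix.mul_one]

lemma conjEquiv_smul {n : ℕ} (T S : Matrix (Fin n) (Fin n) ℂ) (h1 : S * T = 1)
    (h2 : T * S = 1) (c : ℂ) (M : Matrix (Fin n) (Fin n) ℂ) :
    conjEquiv T S h1 h2 (c • M) = c • conjEquiv T S h1 h2 M := by
  show T * (c • M) * S = c • (T * M * S)
  rw [Matrix.mul_smul, Matrix.smul_mul]

/-- Core computation: the commutator vanishes in the eigenbasis. -/
lemma key_comm {n : ℕ} (θv : Fin n → ℂ) (Y : Matrix (Fin n) (Fin n) ℂ) (β γ ϱ : ℂ)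
    (hY : ∀ i j : Fin n, ((i : ℕ) + 1 < (j : ℕ) ∨ (j : ℕ) + 1 < (i : ℕ)) → Y i j = 0)
    (hP : ∀ i j : Fin n, ((i : ℕ) = (j : ℕ) + 1 ∨ (j : ℕ) = (i : ℕ) + 1) →
      θv i ^ 2 - β * θv i * θv j + θv j ^ 2 - γ * (θv i + θv j) - ϱ = 0) :
    Matrix.diagonal θv * (Matrix.diagonal θv ^ 2 * Y - β • (Matrix.diagonal θv * Y * Matrix.diagonal θv)
        + Y * Matrix.diagonal θv ^ 2 - γ • (Matrix.diagonal θv * Y + Y * Matrix.diagonal θv) - ϱ • Y)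
      - (Matrix.diagonal θv ^ 2 * Y - β • (Matrix.diagonal θv * Y * Matrix.diagonal θv)
        + Y * Matrix.diagonal θv ^ 2 - γ • (Matrix.diagonal θv * Y + Y * Matrix.diagonal θv) - ϱ • Y)
        * Matrix.diagonal θv = 0 := by
  have hsq : Matrix.diagonal θv ^ 2 = Matrix.diagonal (fun i => θv i * θv i) := by
    rw [pow_two, Matrix.diagonal_mul_diagonal]
  rw [hsq]
  ext i j
  simp only [Matrix.sub_apply, Matrix.add_apply, Matrix.smul_apply, smul_eq_mul,
    Matrix.diagonal_mul, Matrix.mul_diagonal, Matrix.zero_apply]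
  by_cases hb : ((i : ℕ) + 1 < (j : ℕ) ∨ (j : ℕ) + 1 < (i : ℕ))
  · rw [hY i j hb]; ring
  · push_neg at hb
    rcases (by omega : (i : ℕ) = (j : ℕ) + 1 ∨ (j : ℕ) = (i : ℕ) + 1 ∨ (i : ℕ) = (j : ℕ)) with h | h | h
    · have := hP i j (Or.inl h)
      linear_combination (θv i - θv j) * Y i j * this
    · have := hP i j (Or.inr h)
      linear_combination (θv i - θv j) * Y i j * this
    · have : i = j := Fin.ext h
      subst this; ring

theorem stmt_19 (d : ℕ) (hd : 3 ≤ d) (θ θs : ℕ → ℂ)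
    (A B : Matrix (Fin (d + 1)) (Fin (d + 1)) ℂ)
    -- A is irreducible lower bidiagonal with diagonal entries θ
    (hAlow : ∀ i j : Fin (d + 1), (i : ℕ) ≠ (j : ℕ) ∧ (i : ℕ) ≠ (j : ℕ) + 1 → A i j = 0)
    (hAsub : ∀ i j : Fin (d + 1), (i : ℕ) = (j : ℕ) + 1 → A i j ≠ 0)
    (hAdiag : ∀ i : Fin (d + 1), A i i = θ (i : ℕ))
    -- B (playing the role of A*) is irreducible upper bidiagonal with diagonal entries θ*
    (hBup : ∀ i j : Fin (d + 1), (i : ℕ) ≠ (j : ℕ) ∧ (j : ℕ) ≠ (i : ℕ) + 1 → B i j = 0)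
    (hBsup : ∀ i j : Fin (d + 1), (j : ℕ) = (i : ℕ) + 1 → B i j ≠ 0)
    (hBdiag : ∀ i : Fin (d + 1), B i i = θs (i : ℕ))
    -- distinctness
    (hθ : ∀ i ≤ d, ∀ j ≤ d, i ≠ j → θ i ≠ θ j)
    (hθs : ∀ i ≤ d, ∀ j ≤ d, i ≠ j → θs i ≠ θs j)
    (β γ γs ϱ ϱs : ℂ)
    (hβ : ∀ i, 2 ≤ i → i ≤ d - 1 →
      β + 1 = (θ (i - 2) - θ (i + 1)) / (θ (i - 1) - θ i)
      ∧ β + 1 = (θs (i - 2) - θs (i + 1)) / (θs (i - 1) - θs i))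
    (hγ : ∀ i, 1 ≤ i → i ≤ d - 1 → γ = θ (i - 1) - β * θ i + θ (i + 1))
    (hγs : ∀ i, 1 ≤ i → i ≤ d - 1 → γs = θs (i - 1) - β * θs i + θs (i + 1))
    (hϱ : ∀ i, 1 ≤ i → i ≤ d →
      ϱ = θ (i - 1) ^ 2 - β * θ (i - 1) * θ i + θ i ^ 2 - γ * (θ (i - 1) + θ i))
    (hϱs : ∀ i, 1 ≤ i → i ≤ d →
      ϱs = θs (i - 1) ^ 2 - β * θs (i - 1) * θs i + θs i ^ 2 - γs * (θs (i - 1) + θs i))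
    -- A, B form a Leonard pair with eigenvalue sequence θ and dual eigenvalue sequence θ*
    (hLP1 : ∃ T : Matrix (Fin (d + 1)) (Fin (d + 1)) ℂ, IsUnit T
      ∧ T⁻¹ * A * T = Matrix.diagonal (fun i : Fin (d + 1) => θ (i : ℕ))
      ∧ IsIrredTridiagonal (T⁻¹ * B * T))
    (hLP2 : ∃ T : Matrix (Fin (d + 1)) (Fin (d + 1)) ℂ, IsUnit T
      ∧ IsIrredTridiagonal (T⁻¹ * A * T)
      ∧ T⁻¹ * B * T = Matrix.diagonal (fun i : Fin (d + 1) => θs (i : ℕ))) :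
    A * (A ^ 2 * B - β • (A * B * A) + B * A ^ 2 - γ • (A * B + B * A) - ϱ • B)
      - (A ^ 2 * B - β • (A * B * A) + B * A ^ 2 - γ • (A * B + B * A) - ϱ • B) * A = 0
    ∧ B * (B ^ 2 * A - β • (B * A * B) + A * B ^ 2 - γs • (B * A + A * B) - ϱs • A)
      - (B ^ 2 * A - β • (B * A * B) + A * B ^ 2 - γs • (B * A + A * B) - ϱs • A) * B = 0 := by
  -- the polynomial conditions on adjacent eigenvalues
  have hP1 : ∀ i j : Fin (d + 1), ((i : ℕ) = (j : ℕ) + 1 ∨ (j : ℕ) = (i : ℕ) + 1) →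
      θ (i : ℕ) ^ 2 - β * θ (i : ℕ) * θ (j : ℕ) + θ (j : ℕ) ^ 2
        - γ * (θ (i : ℕ) + θ (j : ℕ)) - ϱ = 0 := by
    intro i j hij
    have hi := i.isLt
    have hj := j.isLt
    rcases hij with h | h
    · have hh := hϱ (i : ℕ) (by omega) (by omega)
      have e : (i : ℕ) - 1 = (j : ℕ) := by omega
      rw [e] at hh
      linear_combination -hh
    · have hh := hϱ (j : ℕ) (by omega) (by omega)
      have e : (j : ℕ) - 1 = (i : ℕ) := by omega
      rw [e] at hh
      linear_combination -hh
  have hP2 : ∀ i j : Fin (d + 1), ((i : ℕ) = (j : ℕ) + 1 ∨ (j : ℕ) = (i : ℕ) + 1) →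
      θs (i : ℕ) ^ 2 - β * θs (i : ℕ) * θs (j : ℕ) + θs (j : ℕ) ^ 2
        - γs * (θs (i : ℕ) + θs (j : ℕ)) - ϱs = 0 := by
    intro i j hij
    have hi := i.isLt
    have hj := j.isLt
    rcases hij with h | h
    · have hh := hϱs (i : ℕ) (by omega) (by omega)
      have e : (i : ℕ) - 1 = (j : ℕ) := by omega
      rw [e] at hh
      linear_combination -hh
    · have hh := hϱs (j : ℕ) (by omega) (by omega)
      have e : (j : ℕ) - 1 = (i : ℕ) := by omega
      rw [e] at hh
      linear_combination -hh
  constructor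
  · obtain ⟨T, hT, hdA, htriB⟩ := hLP1
    have hdet := (Matrix.isUnit_iff_isUnit_det T).mp hT
    have h1 : T⁻¹ * T = 1 := Matrix.nonsing_inv_mul T hdet
    have h2 : T * T⁻¹ = 1 := Matrix.mul_nonsing_inv T hdet
    set f := conjEquiv T T⁻¹ h1 h2 with hf
    have hs : ∀ (c : ℂ) (M : Matrix (Fin (d + 1)) (Fin (d + 1)) ℂ),
        c • f M = f (c • M) := fun c M => (conjEquiv_smul T T⁻¹ h1 h2 c M).symm
    have hA : A = f (Matrix.diagonal fun i : Fin (d + 1) => θ (i : ℕ)) := by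
      rw [← hdA]
      show A = T * (T⁻¹ * A * T) * T⁻¹
      have e : T * (T⁻¹ * A * T) * T⁻¹ = (T * T⁻¹) * A * (T * T⁻¹) := by noncomm_ring
      rw [e, h2, Matrix.one_mul, Matrix.mul_one]
    have hB : B = f (T⁻¹ * B * T) := by
      show B = T * (T⁻¹ * B * T) * T⁻¹
      have e : T * (T⁻¹ * B * T) * T⁻¹ = (T * T⁻¹) * B * (T * T⁻¹) := by noncomm_ring
      rw [e, h2, Matrix.one_mul, Matrix.mul_one]
    have hz := key_comm (fun i : Fin (d + 1) => θ (i : ℕ)) (T⁻¹ * B * T) β γ ϱ htriB.1 hP1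
    rw [hA, hB]
    simp only [← map_pow f, ← map_mul f, hs, ← map_add f, ← map_sub f]
    rw [hz, map_zero]
  · obtain ⟨T, hT, htriA, hdB⟩ := hLP2
    have hdet := (Matrix.isUnit_iff_isUnit_det T).mp hT
    have h1 : T⁻¹ * T = 1 := Matrix.nonsing_inv_mul T hdet
    have h2 : T * T⁻¹ = 1 := Matrix.mul_nonsing_inv T hdet
    set f := conjEquiv T T⁻¹ h1 h2 with hf
    have hs : ∀ (c : ℂ) (M : Matrix (Fin (d + 1)) (Fin (d + 1)) ℂ),
        c • f M = f (c • M) := fun c M => (conjEquiv_smul T T⁻¹ h1 h2 c M).symm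
    have hB : B = f (Matrix.diagonal fun i : Fin (d + 1) => θs (i : ℕ)) := by
      rw [← hdB]
      show B = T * (T⁻¹ * B * T) * T⁻¹
      have e : T * (T⁻¹ * B * T) * T⁻¹ = (T * T⁻¹) * B * (T * T⁻¹) := by noncomm_ring
      rw [e, h2, Matrix.one_mul, Matrix.mul_one]
    have hA : A = f (T⁻¹ * A * T) := by
      show A = T * (T⁻¹ * A * T) * T⁻¹
      have e : T * (T⁻¹ * A * T) * T⁻¹ = (T * T⁻¹) * A * (T * T⁻¹) := by noncomm_ring
      rw [e, h2, Matrix.one_mul, Matrix.mul_one]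
    have hz := key_comm (fun i : Fin (d + 1) => θs (i : ℕ)) (T⁻¹ * A * T) β γs ϱs htriA.1 hP2
    rw [hA, hB]
    simp only [← map_pow f, ← map_mul f, hs, ← map_add f, ← map_sub f]
    rw [hz, map_zero]
end
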